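/- Unitarity soundness for PUNQ: for any closed superposition λx.t⃗ ∈ ⟦♯(𝔹ⁿ) ⊸ ♯(𝔹ᵏ)⟧_∅ with k, n ≥ 1: (1) if k ≥ n, then λx.t⃗ represents an isometry ℂ^{2ⁿ} → ℂ^{2ᵏ}; (2) if k = n, then λx.t⃗ represents a unitary operator ℂ^{2ⁿ} → ℂ^{2ⁿ}; furthermore, if k < n, then ⟦♯(𝔹ⁿ) ⊸ ♯(𝔹ᵏ)⟧_∅ is empty. -/

import Mathlib

open scoped Classical

namespace PUNQFormal

/-! ### PUNQ syntax (Figure 1) -/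

mutual
inductive Term : Type
  | var : ℕ → Term
  | ket0 : Term
  | ket1 : Term
  | cond : Term → Sup → Sup → Term
  | lam : ℕ → Sup → Term
  | app : Term → Term → Term
  | pair : Term → Term → Term
  | lett : ℕ → ℕ → Term → Sup → Term
inductive Sup : Type
  | term : Term → Sup
  | zero : Sup
  | smul : ℂ → Sup → Sup
  | add : Sup → Sup → Sup
end

/-- Basis values. -/
inductive BasisValue : Term → Prop
  | ket0 : BasisValue .ket0
  | ket1 : BasisValue .ket1
  | lam (x : ℕ) (b : Sup) : BasisValue (.lam x b)
  | pair {v w : Term} : BasisValue v → BasisValue w → BasisValue (.pair v w)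

/-- Values: superpositions of basis values. -/
inductive Value : Sup → Prop
  | basis {v : Term} : BasisValue v → Value (.term v)
  | zero : Value .zero
  | smul (α : ℂ) {s : Sup} : Value s → Value (.smul α s)
  | add {s t : Sup} : Value s → Value t → Value (.add s t)

mutual
def fvT : Term → Finset ℕ
  | .var x => {x}
  | .ket0 => ∅
  | .ket1 => ∅
  | .cond t s r => fvT t ∪ fvS s ∪ fvS r
  | .lam x b => fvS b \ {x}
  | .app t s => fvT t ∪ fvT s
  | .pair t s => fvT t ∪ fvT s
  | .lett x y t b => fvT t ∪ (fvS b \ {x, y})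
def fvS : Sup → Finset ℕ
  | .term t => fvT t
  | .zero => ∅
  | .smul _ s => fvS s
  | .add s t => fvS s ∪ fvS t
end

/-! ### Syntactic sugar (Figure 2): distributing constructs over superpositions -/

def iteS : Sup → Sup → Sup → Sup
  | .term t, s, r => .term (.cond t s r)
  | .zero, _, _ => .zero
  | .smul α c, s, r => .smul α (iteS c s r)
  | .add c d, s, r => .add (iteS c s r) (iteS d s r)

def appSR (t : Term) : Sup → Sup
  | .term r => .term (.app t r)
  | .zero => .zero
  | .smul α s => .smul α (appSR t s)
  | .add s r => .add (appSR t s) (appSR t r)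

def appS : Sup → Sup → Sup
  | .term t, u => appSR t u
  | .zero, _ => .zero
  | .smul α s, u => .smul α (appS s u)
  | .add s r, u => .add (appS s u) (appS r u)

def pairSR (t : Term) : Sup → Sup
  | .term r => .term (.pair t r)
  | .zero => .zero
  | .smul α s => .smul α (pairSR t s)
  | .add s r => .add (pairSR t s) (pairSR t r)

def pairS : Sup → Sup → Sup
  | .term t, u => pairSR t u
  | .zero, _ => .zero
  | .smul α s, u => .smul α (pairS s u)
  | .add s r, u => .add (pairS s u) (pairS r u)

def letS (x y : ℕ) : Sup → Sup → Sup
  | .term t, b => .term (.lett x y t b)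
  | .zero, _ => .zero
  | .smul α c, b => .smul α (letS x y c b)
  | .add c d, b => .add (letS x y c b) (letS x y d b)

/-! ### Substitution -/

mutual
/-- Substitution of a superposition for a variable in a term,
distributing over superpositions via the syntactic sugar. -/
def substT : Term → ℕ → Sup → Sup
  | .var y, x, u => if y = x then u else .term (.var y)
  | .ket0, _, _ => .term .ket0
  | .ket1, _, _ => .term .ket1
  | .cond t s r, x, u => iteS (substT t x u) (substS s x u) (substS r x u)
  | .lam y b, x, u => if y = x then .term (.lam y b) else .term (.lam y (substS b x u))
  | .app t s, x, u => appS (substT t x u) (substT s x u)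
  | .pair t s, x, u => pairS (substT t x u) (substT s x u)
  | .lett y z t b, x, u =>
      letS y z (substT t x u) (if x = y ∨ x = z then b else substS b x u)
def substS : Sup → ℕ → Sup → Sup
  | .term t, x, u => substT t x u
  | .zero, _, _ => .zero
  | .smul α s, x, u => .smul α (substS s x u)
  | .add s r, x, u => .add (substS s x u) (substS r x u)
end

mutual
/-- Simultaneous substitution of terms for variables. -/
def msubT : Term → (ℕ → Option Term) → Term
  | .var y, σ => (σ y).getD (.var y)
  | .ket0, _ => .ket0
  | .ket1, _ => .ket1
  | .cond t s r, σ => .cond (msubT t σ) (msubS s σ) (msubS r σ)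
  | .lam y b, σ => .lam y (msubS b fun z => if z = y then none else σ z)
  | .app t s, σ => .app (msubT t σ) (msubT s σ)
  | .pair t s, σ => .pair (msubT t σ) (msubT s σ)
  | .lett y z t b, σ =>
      .lett y z (msubT t σ) (msubS b fun w => if w = y ∨ w = z then none else σ w)
def msubS : Sup → (ℕ → Option Term) → Sup
  | .term t, σ => .term (msubT t σ)
  | .zero, _ => .zero
  | .smul α s, σ => .smul α (msubS s σ)
  | .add s r, σ => .add (msubS s σ) (msubS r σ)
end

/-- Renaming `t[x/y]`: replace the free variable `y` by `x`. -/
def rename (t : Sup) (y x : ℕ) : Sup :=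
  msubS t fun z => if z = y then some (.var x) else none

/-! ### The vector-space equivalence ≡ -/

inductive SupEq : Sup → Sup → Prop
  | addComm (s t : Sup) : SupEq (.add s t) (.add t s)
  | addAssoc (s t r : Sup) : SupEq (.add (.add s t) r) (.add s (.add t r))
  | zeroAdd (t : Sup) : SupEq (.add .zero t) t
  | zeroSmul (t : Sup) : SupEq (.smul 0 t) .zero
  | oneSmul (t : Sup) : SupEq (.smul 1 t) t
  | smulSmul (α β : ℂ) (t : Sup) : SupEq (.smul α (.smul β t)) (.smul (α * β) t)
  | smulAddSame (α β : ℂ) (t : Sup) :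
      SupEq (.add (.smul α t) (.smul β t)) (.smul (α + β) t)
  | smulDist (α : ℂ) (s t : Sup) :
      SupEq (.smul α (.add s t)) (.add (.smul α s) (.smul α t))
  | refl (t : Sup) : SupEq t t
  | symm {s t : Sup} : SupEq s t → SupEq t s
  | trans {s t r : Sup} : SupEq s t → SupEq t r → SupEq s r
  | smulCongr (α : ℂ) {s t : Sup} : SupEq s t → SupEq (.smul α s) (.smul α t)
  | addCongr {s t s' t' : Sup} : SupEq s t → SupEq s' t' → SupEq (.add s s') (.add t t')

/-! ### Canonical forms -/

def mkSum : List (ℂ × Term) → Sup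
  | [] => .zero
  | [p] => .smul p.1 (.term p.2)
  | p :: l => .add (.smul p.1 (.term p.2)) (mkSum l)

def mkSumS : List (ℂ × Sup) → Sup
  | [] => .zero
  | [p] => .smul p.1 p.2
  | p :: l => .add (.smul p.1 p.2) (mkSumS l)

/-- Canonical form: pairwise distinct terms, all coefficients nonzero. -/
def CForm (l : List (ℂ × Term)) : Prop :=
  (l.map Prod.snd).Nodup ∧ ∀ p ∈ l, p.1 ≠ 0

/-! ### Operational semantics (Figure 3) -/

inductive Step : Sup → Sup → Prop
  | if0 {s t : Sup} : Step (.term (.cond .ket0 s t)) s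
  | if1 {s t : Sup} : Step (.term (.cond .ket1 s t)) t
  | abs {x : ℕ} {b : Sup} {v : Term} :
      BasisValue v → Step (.term (.app (.lam x b) v)) (substS b x (.term v))
  | lett {x y : ℕ} {v w : Term} {b : Sup} :
      BasisValue v → BasisValue w →
      Step (.term (.lett x y (.pair v w) b)) (substS (substS b x (.term v)) y (.term w))
  | condCong {t : Term} {s r₁ r₂ : Sup} :
      Step (.term t) s → Step (.term (.cond t r₁ r₂)) (iteS s r₁ r₂)
  | appR {r t : Term} {s : Sup} :
      Step (.term t) s → Step (.term (.app r t)) (appSR r s)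
  | appL {t v : Term} {s : Sup} :
      BasisValue v → Step (.term t) s → Step (.term (.app t v)) (appS s (.term v))
  | pairL {t r : Term} {s : Sup} :
      Step (.term t) s → Step (.term (.pair t r)) (pairS s (.term r))
  | pairR {v t : Term} {s : Sup} :
      BasisValue v → Step (.term t) s → Step (.term (.pair v t)) (pairS (.term v) s)
  | letCong {x y : ℕ} {t : Term} {s r : Sup} :
      Step (.term t) s → Step (.term (.lett x y t r)) (letS x y s r)
  | sup (l w : List (ℂ × Term)) (f : ℕ → Sup) :
      l ≠ [] →
      CForm (l ++ w) →
      (∀ i : Fin l.length, Step (.term (l.get i).2) (f i.val)) →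
      (∀ p ∈ w, BasisValue p.2) →
      Step (mkSum (l ++ w))
        (Sup.add (mkSumS ((List.range l.length).map fun i => ((l.getD i (0, Term.ket0)).1, f i)))
          (mkSum w))
  | equ {t t₁ s₁ s : Sup} : SupEq t t₁ → Step t₁ s₁ → SupEq s₁ s → Step t s

/-- Reflexive-transitive closure of the small-step relation. -/
def StepStar : Sup → Sup → Prop := Relation.ReflTransGen Step

inductive StepN : ℕ → Sup → Sup → Prop
  | zero (t : Sup) : StepN 0 t t
  | succ {n : ℕ} {t s r : Sup} : Step t s → StepN n s r → StepN (n + 1) t r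

/-! ### Inner product and orthogonality -/

noncomputable def coeff (v : Term) : Sup → ℂ
  | .term w => if v = w then 1 else 0
  | .zero => 0
  | .smul α s => α * coeff v s
  | .add s t => coeff v s + coeff v t

/-- Inner product on (raw syntactic) values. -/
noncomputable def inn : Sup → Sup → ℂ
  | .term v, w => coeff v w
  | .zero, _ => 0
  | .smul α s, w => (starRingEnd ℂ) α * inn s w
  | .add s t, w => inn s w + inn t w

/-- Orthogonality of closed superpositions. -/
def Ortho (t s : Sup) : Prop :=
  ∃ v w : Sup, Value v ∧ Value w ∧ StepStar t v ∧ StepStar s w ∧ inn v w = 0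

/-- Orthogonality of open superpositions: orthogonality under every substitution of
the variables of the domain `D` by closed basis values. -/
def OrthoOpen (D : Set ℕ) (s₁ s₂ : Sup) : Prop :=
  ∀ σ : ℕ → Option Term,
    (∀ x ∈ D, ∃ v, σ x = some v ∧ BasisValue v ∧ fvT v = ∅) →
    (∀ x ∉ D, σ x = none) →
    Ortho (msubS s₁ σ) (msubS s₂ σ)

/-! ### Sizes -/

mutual
def sizeT : Term → ℕ
  | .var _ => 1
  | .ket0 => 1
  | .ket1 => 1
  | .cond t s r => 1 + sizeT t + max (sizeS s) (sizeS r)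
  | .lam _ b => 1 + sizeS b
  | .app t s => 1 + sizeT t + sizeT s
  | .pair t s => 1 + sizeT t + sizeT s
  | .lett _ _ t b => 1 + sizeT t + sizeS b
def sizeS : Sup → ℕ
  | .term t => sizeT t
  | .zero => 0
  | .smul _ s => sizeS s
  | .add s t => max (sizeS s) (sizeS t)
end

/-! ### Types (Section 3.1) -/

inductive Ty : Type
  | tvar : ℕ → Ty
  | lolli : Ty → Ty → Ty
  | arrow : Ty → Ty → Ty
  | prod : Ty → Ty → Ty
  | bit : Ty
  | sharp : Ty → Ty
  | sect : Ty → Ty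
  | all : ℕ → Ty → Ty
deriving DecidableEq

/-- Ground types `Q := 𝔹 | ♯Q | §Q | Q×Q`. -/
inductive IsGround : Ty → Prop
  | bit : IsGround .bit
  | sharp {Q} : IsGround Q → IsGround (.sharp Q)
  | sect {Q} : IsGround Q → IsGround (.sect Q)
  | prod {Q R} : IsGround Q → IsGround R → IsGround (.prod Q R)

/-- The bang function `!` (Definition 3.1): erases the `♯` modality. -/
def bang : Ty → Ty
  | .tvar X => .tvar X
  | .bit => .bit
  | .lolli A B => .lolli A B
  | .arrow A B => .arrow A B
  | .prod A B => .prod (bang A) (bang B)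
  | .sharp Q => bang Q
  | .sect A => .sect (bang A)
  | .all X A => .all X (bang A)

/-- Subtyping (Figure 4). -/
inductive Sub : Ty → Ty → Prop
  | refl (A : Ty) : Sub A A
  | trans {A B C} : Sub A B → Sub B C → Sub A C
  | lolli {A A' B B'} : Sub A' A → Sub B B' → Sub (.lolli A B) (.lolli A' B')
  | arrow {A A' B B'} : Sub A' A → Sub B B' → Sub (.arrow A B) (.arrow A' B')
  | prod {A A' B B'} : Sub A A' → Sub B B' → Sub (.prod A B) (.prod A' B')
  | sect {A B} : Sub A B → Sub (.sect A) (.sect B)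
  | all {A B} (X : ℕ) : Sub A B → Sub (.all X A) (.all X B)
  | sharpIntro {Q} : IsGround Q → Sub Q (.sharp Q)
  | sharpIdem {Q} : IsGround Q → Sub (.sharp (.sharp Q)) (.sharp Q)
  | sharpBang {Q} : IsGround Q → Sub Q (.sharp (bang Q))
  | sharpSect {Q} : IsGround Q → Sub (.sharp (.sect Q)) (.sect (.sharp Q))

/-- Polarity-aware type substitution `σ⁺/σ⁻` (`pol = true` is `σ⁺`). -/
def tsubst (pol : Bool) (X : ℕ) (B : Ty) : Ty → Ty
  | .tvar Y => if Y = X then (if pol then B else bang B) else .tvar Y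
  | .bit => .bit
  | .lolli A C => .lolli (tsubst pol X B A) (tsubst pol X B C)
  | .arrow A C => .arrow (tsubst false X B A) (tsubst true X B C)
  | .prod A C => .prod (tsubst pol X B A) (tsubst pol X B C)
  | .sharp Q => .sharp (tsubst pol X B Q)
  | .sect A => .sect (tsubst pol X B A)
  | .all Y A => if Y = X then .all Y A else .all Y (tsubst pol X B A)

/-- Free type variables of a type. -/
def ftvTy : Ty → Finset ℕ
  | .tvar X => {X}
  | .bit => ∅
  | .lolli A B => ftvTy A ∪ ftvTy B
  | .arrow A B => ftvTy A ∪ ftvTy B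
  | .prod A B => ftvTy A ∪ ftvTy B
  | .sharp A => ftvTy A
  | .sect A => ftvTy A
  | .all X A => ftvTy A \ {X}

/-! ### Typing environments -/

abbrev Ctx (T : Type) := ℕ → Option T

def Ctx.emp {T : Type} : Ctx T := fun _ => none
def Ctx.single {T : Type} (x : ℕ) (A : T) : Ctx T := fun y => if y = x then some A else none
def Ctx.union {T : Type} (Γ Δ : Ctx T) : Ctx T := fun x => (Γ x).orElse fun _ => Δ x
def Ctx.Disj {T : Type} (Γ Δ : Ctx T) : Prop := ∀ x, Γ x = none ∨ Δ x = none
def Ctx.dom {T : Type} (Γ : Ctx T) : Set ℕ := {x | Γ x ≠ none}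

/-- All four contexts pairwise disjoint. -/
def Ok4 {T : Type} (Γ Γ' Δ Δ' : Ctx T) : Prop :=
  Ctx.Disj Γ Γ' ∧ Ctx.Disj Γ Δ ∧ Ctx.Disj Γ Δ' ∧ Ctx.Disj Γ' Δ ∧ Ctx.Disj Γ' Δ' ∧ Ctx.Disj Δ Δ'

def ctxFtv (Γ : Ctx Ty) : Set ℕ := {X | ∃ x A, Γ x = some A ∧ X ∈ ftvTy A}

/-! ### The PUNQ type system (Figure 5) -/

inductive TJ : Ctx Ty → Ctx Ty → Sup → Ty → Prop
  | weak {Γ Γ' Δ : Ctx Ty} {t : Sup} {A : Ty} :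
      TJ Γ Δ t A → Ctx.Disj Γ Γ' → Ctx.Disj Γ' Δ →
      TJ (Ctx.union Γ Γ') Δ t A
  | contr {Γ Δ : Ctx Ty} {t : Sup} {A B : Ty} {x y : ℕ} :
      TJ (Ctx.union Γ (Ctx.union (Ctx.single x B) (Ctx.single y B))) Δ t A →
      x ≠ y → Γ x = none → Γ y = none → Δ x = none → Δ y = none →
      TJ (Ctx.union Γ (Ctx.single x B)) Δ (rename t y x) A
  | equiv {Γ Δ : Ctx Ty} {t s : Sup} {A : Ty} :
      TJ Γ Δ t A → SupEq t s → TJ Γ Δ s A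
  | sub {Γ Δ : Ctx Ty} {t : Sup} {A B : Ty} :
      TJ Γ Δ t A → Sub A B → TJ Γ Δ t B
  | ax (x : ℕ) (A : Ty) : TJ Ctx.emp (Ctx.single x A) (.term (.var x)) A
  | ket0 : TJ Ctx.emp Ctx.emp (.term .ket0) .bit
  | ket1 : TJ Ctx.emp Ctx.emp (.term .ket1) .bit
  | cond {Γ Δ Γ' Δ' : Ctx Ty} {t : Term} {s₁ s₂ : Sup} {A : Ty} :
      TJ Γ Δ (.term t) .bit → TJ Γ' Δ' s₁ A → TJ Γ' Δ' s₂ A → Ok4 Γ Γ' Δ Δ' →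
      TJ (Ctx.union Γ Γ') (Ctx.union Δ Δ') (.term (.cond t s₁ s₂)) A
  | condSharp {Γ Δ Γ' Δ' : Ctx Ty} {t : Term} {s₁ s₂ : Sup} {Q : Ty} :
      TJ Γ Δ (.term t) (.sharp .bit) → TJ Γ' Δ' s₁ Q → TJ Γ' Δ' s₂ Q →
      IsGround Q → OrthoOpen (Ctx.dom (Ctx.union Γ' Δ')) s₁ s₂ → Ok4 Γ Γ' Δ Δ' →
      TJ (Ctx.union Γ Γ') (Ctx.union Δ Δ') (.term (.cond t s₁ s₂)) (.sharp Q)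
  | sectI {Γ Δ : Ctx Ty} {t : Sup} {A : Ty} :
      TJ Ctx.emp (Ctx.union Γ Δ) t A → Ctx.Disj Γ Δ →
      TJ Γ (fun x => (Δ x).map Ty.sect) t (.sect A)
  | sectE {Γ Δ Γ' Δ' : Ctx Ty} {s t : Term} {x : ℕ} {A B : Ty} :
      TJ Γ Δ (.term s) (.sect B) →
      TJ Γ' (Ctx.union Δ' (Ctx.single x (.sect B))) (.term t) A →
      Ok4 Γ Γ' Δ Δ' → Γ' x = none → Δ' x = none →
      TJ (Ctx.union Γ Γ') (Ctx.union Δ Δ') (substT t x (.term s)) A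
  | allI {Γ Δ : Ctx Ty} {t : Sup} {A : Ty} {X : ℕ} :
      TJ Γ Δ t A → X ∉ ctxFtv Γ ∪ ctxFtv Δ → TJ Γ Δ t (.all X A)
  | allE {Γ Δ : Ctx Ty} {t : Sup} {A : Ty} {X : ℕ} (B : Ty) :
      TJ Γ Δ t (.all X A) → TJ Γ Δ t (tsubst true X B A)
  | sharpI {Γ Δ : Ctx Ty} {Q : Ty} (l : List (ℂ × Sup)) :
      IsGround Q → (∀ p ∈ l, TJ Γ Δ p.2 Q) →
      l.Pairwise (fun p q => OrthoOpen (Ctx.dom (Ctx.union Γ Δ)) p.2 q.2) →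
      (l.map fun p => Complex.normSq p.1).sum = 1 →
      TJ Γ Δ (mkSumS l) (.sharp Q)
  | lolliI {Γ Δ : Ctx Ty} {b : Sup} {A B : Ty} (x : ℕ) :
      TJ Γ (Ctx.union Δ (Ctx.single x A)) b B → Γ x = none → Δ x = none →
      TJ Γ Δ (.term (.lam x b)) (.lolli A B)
  | lolliE {Γ Δ Γ' Δ' : Ctx Ty} {t s : Term} {A B : Ty} :
      TJ Γ Δ (.term t) (.lolli A B) → TJ Γ' Δ' (.term s) A → Ok4 Γ Γ' Δ Δ' →
      TJ (Ctx.union Γ Γ') (Ctx.union Δ Δ') (.term (.app t s)) B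
  | arrowI {Γ Δ : Ctx Ty} {b : Sup} {A B : Ty} (x : ℕ) :
      TJ (Ctx.union Γ (Ctx.single x A)) Δ b B → Γ x = none → Δ x = none →
      TJ Γ Δ (.term (.lam x b)) (.arrow (bang A) B)
  | arrowE0 {Γ Δ : Ctx Ty} {t s : Term} {A B : Ty} :
      TJ Γ Δ (.term t) (.arrow A B) → TJ Ctx.emp Ctx.emp (.term s) A →
      TJ Γ Δ (.term (.app t s)) B
  | arrowE1 {Γ Δ : Ctx Ty} {t s : Term} {A B : Ty} (z : ℕ) (C : Ty) :
      TJ Γ Δ (.term t) (.arrow A B) → TJ Ctx.emp (Ctx.single z C) (.term s) A →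
      Γ z = none → Δ z = none →
      TJ (Ctx.union Γ (Ctx.single z C)) Δ (.term (.app t s)) B
  | prodI {Γ Δ Γ' Δ' : Ctx Ty} {t s : Term} {A B : Ty} :
      TJ Γ Δ (.term t) A → TJ Γ' Δ' (.term s) B → Ok4 Γ Γ' Δ Δ' →
      TJ (Ctx.union Γ Γ') (Ctx.union Δ Δ') (.term (.pair t s)) (.prod A B)
  | prodE {Γ Δ Γ' Δ' : Ctx Ty} {t : Term} {s : Sup} {A B C : Ty} (x y : ℕ) :
      TJ Γ Δ (.term t) (.prod A B) →
      TJ Γ' (Ctx.union (Ctx.union Δ' (Ctx.single x A)) (Ctx.single y B)) s C →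
      x ≠ y → Γ' x = none → Δ' x = none → Γ' y = none → Δ' y = none →
      Ok4 Γ Γ' Δ Δ' →
      TJ (Ctx.union Γ Γ') (Ctx.union Δ Δ') (.term (.lett x y t s)) C
  | prodESharp {Γ Δ Γ' Δ' : Ctx Ty} {t : Term} {s : Sup} {Q R S : Ty} (x y : ℕ) :
      TJ Γ Δ (.term t) (.sharp (.prod Q R)) →
      TJ Γ' (Ctx.union (Ctx.union Δ' (Ctx.single x (.sharp Q))) (Ctx.single y (.sharp R))) s S →
      IsGround Q → IsGround R → IsGround S →
      x ≠ y → Γ' x = none → Δ' x = none → Γ' y = none → Δ' y = none →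
      Ok4 Γ Γ' Δ Δ' →
      TJ (Ctx.union Γ Γ') (Ctx.union Δ Δ') (.term (.lett x y t s)) (.sharp S)

/-! ### Realizability semantics (Figure 6) -/

/-- Closed superpositions. -/
def ClosedS (s : Sup) : Prop := fvS s = ∅

/-- The unit sphere: closed values of norm 1. -/
def S1 : Set Sup := {v | Value v ∧ ClosedS v ∧ ‖inn v v‖ ^ 2 = 1}

/-- `t ⊩ S`: `t` reduces to some value in `S`. -/
def Realizes (t : Sup) (S : Set Sup) : Prop := ∃ v ∈ S, StepStar t v

/-- Span: finite linear combinations (up to `≡`) of elements of `S`. -/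
def spanS (S : Set Sup) : Set Sup :=
  {s | ∃ l : List (ℂ × Sup), (∀ p ∈ l, p.2 ∈ S) ∧ SupEq s (mkSumS l)}

/-- The basis values occurring with nonzero amplitude in a value. -/
def baseOf : Sup → Set Term
  | .term v => {v}
  | .zero => ∅
  | .smul α s => if α = 0 then ∅ else baseOf s
  | .add s t => baseOf s ∪ baseOf t

/-- `♭S`. -/
def flatS (S : Set Sup) : Set Term := ⋃ v ∈ S, baseOf v

/-- The unitary semantics `⟦A⟧_τ` (Figure 6). -/
def sem : Ty → (ℕ → Set Sup) → Set Sup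
  | .tvar X, τ => τ X
  | .bit, _ => {Sup.term .ket0, Sup.term .ket1}
  | .sharp A, τ => spanS (sem A τ) ∩ S1
  | .sect A, τ => sem A τ
  | .prod A B, τ => {s | ∃ v ∈ sem A τ, ∃ w ∈ sem B τ, s = pairS v w}
  | .lolli A B, τ =>
      {s | (∃ x b, s = .term (.lam x b)) ∧ ∀ v ∈ sem A τ, Realizes (appS s v) (sem B τ)}
  | .arrow A B, τ =>
      {s | (∃ x b, s = .term (.lam x b)) ∧
        ∀ v ∈ flatS (sem A τ), Realizes (appS s (.term v)) (sem B τ)}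
  | .all X A, τ => {s | ∀ R : Set Sup, R ⊆ S1 → s ∈ sem A (Function.update τ X R)}

/-- Types with no type variables and no universal quantifiers. -/
inductive SimpleTy : Ty → Prop
  | bit : SimpleTy .bit
  | lolli {A B} : SimpleTy A → SimpleTy B → SimpleTy (.lolli A B)
  | arrow {A B} : SimpleTy A → SimpleTy B → SimpleTy (.arrow A B)
  | prod {A B} : SimpleTy A → SimpleTy B → SimpleTy (.prod A B)
  | sharp {A} : SimpleTy A → SimpleTy (.sharp A)
  | sect {A} : SimpleTy A → SimpleTy (.sect A)

/-! ### Validity of judgments (Section 5.1) -/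

/-- Decomposition of a superposition into a linear combination of terms. -/
def decomp : Sup → List (ℂ × Term)
  | .term t => [(1, t)]
  | .zero => []
  | .smul α s => (decomp s).map fun p => (α * p.1, p.2)
  | .add s t => decomp s ++ decomp t

/-- Plain substitution of a single (basis-value) term. -/
def subst1 (t : Sup) (x : ℕ) (v : Term) : Sup :=
  msubS t fun y => if y = x then some v else none

/-- Linear-extension substitution `t⃗⟨u⃗/x⟩ = Σᵢ αᵢ · t⃗[vᵢ/x]`. -/
def lsubst (t : Sup) (x : ℕ) (u : Sup) : Sup :=
  mkSumS ((decomp u).map fun p => (p.1, subst1 t x p.2))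

/-- Apply a finite substitution (of closed values) by linear extension. -/
def applyVSubst (σ : List (ℕ × Sup)) (t : Sup) : Sup :=
  σ.foldl (fun t p => lsubst t p.1 p.2) t

/-- `σ ∈ ⟦Γ⟧_τ`: a substitution with domain `dom Γ` assigning to each variable a
closed value in the semantics of its type. -/
def SemSubst (τ : ℕ → Set Sup) (Γ : Ctx Ty) (σ : List (ℕ × Sup)) : Prop :=
  (σ.map Prod.fst).Nodup ∧
  (∀ x, (Γ x).isSome ↔ x ∈ σ.map Prod.fst) ∧
  (∀ p ∈ σ, ∀ A, Γ p.1 = some A → p.2 ∈ sem A τ)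

/-- A typing judgment `Γ;Δ ⊢ t⃗ : A` is valid. -/
def ValidJ (Γ Δ : Ctx Ty) (t : Sup) (A : Ty) : Prop :=
  Ctx.dom Δ ⊆ ↑(fvS t) ∧ (↑(fvS t) : Set ℕ) ⊆ Ctx.dom Γ ∪ Ctx.dom Δ ∧
  ∀ (τ : ℕ → Set Sup) (σ : List (ℕ × Sup)),
    (∀ X, τ X ⊆ S1) →
    SemSubst τ (Ctx.union Γ Δ) σ →
    Realizes (applyVSubst σ t) (sem A τ)

/-! ### Qubit tuples, isometries, representation (Section 5.2) -/

/-- The type `𝔹ⁿ` of `n`-tuples of bits. -/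
def bitsTy : ℕ → Ty
  | 0 => .bit
  | 1 => .bit
  | n + 2 => .prod .bit (bitsTy (n + 1))

def ketBit (b : Bool) : Term := if b then .ket1 else .ket0

/-- `|i⟩` as a right-nested `n`-tuple of bits (most significant bit first). -/
def ketN : ℕ → ℕ → Term
  | 0, _ => .ket0
  | 1, i => ketBit (i.testBit 0)
  | n + 2, i => .pair (ketBit (i.testBit (n + 1))) (ketN (n + 1) i)

/-- The linear map `[[·]]` sending a value of type `♯(𝔹ⁿ)` to its coordinate vector. -/
noncomputable def lmap (n : ℕ) (v : Sup) : Fin (2 ^ n) → ℂ :=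
  fun i => inn (.term (ketN n i.val)) v

noncomputable def cInner {m : ℕ} (u v : Fin m → ℂ) : ℂ :=
  ∑ i, (starRingEnd ℂ) (u i) * v i

/-- An operator is isometric if it preserves the inner product. -/
def IsIsometricOp {n k : ℕ} (F : (Fin n → ℂ) →ₗ[ℂ] (Fin k → ℂ)) : Prop :=
  ∀ u v, cInner (F u) (F v) = cInner u v

/-- The empty type-variable valuation. -/
def emptyVal : ℕ → Set Sup := fun _ => ∅

/-- `t⃗` (of type `♯(𝔹ⁿ) ⊸ ♯(𝔹ᵏ)`) represents the operator `F`. -/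
def Represents (n k : ℕ) (t : Sup)
    (F : (Fin (2 ^ n) → ℂ) →ₗ[ℂ] (Fin (2 ^ k) → ℂ)) : Prop :=
  ∀ v w : Sup, v ∈ sem (.sharp (bitsTy n)) emptyVal → w ∈ sem (.sharp (bitsTy k)) emptyVal →
    (StepStar (appS t v) w ↔ F (lmap n v) = lmap k w)

/-! ### DLAL_*: terms, reduction, typing (Section 6.1, Figure 8) -/

inductive DTerm : Type
  | var : ℕ → DTerm
  | lam : ℕ → DTerm → DTerm
  | app : DTerm → DTerm → DTerm
  | star : DTerm
deriving DecidableEq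

/-- Size of a DLAL_* term (number of symbols). -/
def dsize : DTerm → ℕ
  | .var _ => 1
  | .lam _ t => 1 + dsize t
  | .app t s => 1 + dsize t + dsize s
  | .star => 1

def dsubst : DTerm → ℕ → DTerm → DTerm
  | .var y, x, u => if y = x then u else .var y
  | .lam y b, x, u => if y = x then .lam y b else .lam y (dsubst b x u)
  | .app t s, x, u => .app (dsubst t x u) (dsubst s x u)
  | .star, _, _ => .star

def drename (t : DTerm) (y x : ℕ) : DTerm := dsubst t y (.var x)

/-- Call-by-value values. -/
inductive DVal : DTerm → Prop
  | var (x : ℕ) : DVal (.var x)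
  | lam (x : ℕ) (t : DTerm) : DVal (.lam x t)
  | star : DVal .star

/-- Call-by-value β-reduction; `*` never reduces. -/
inductive DStep : DTerm → DTerm → Prop
  | beta {x : ℕ} {t v : DTerm} : DVal v → DStep (.app (.lam x t) v) (dsubst t x v)
  | appL {t t' s : DTerm} : DStep t t' → DStep (.app t s) (.app t' s)
  | appR {v s s' : DTerm} : DVal v → DStep s s' → DStep (.app v s) (.app v s')

def DNormal (t : DTerm) : Prop := ∀ s, ¬ DStep t s

/-- DLAL types. -/
inductive DTy : Type
  | tvar : ℕ → DTy
  | lolli : DTy → DTy → DTy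
  | arrow : DTy → DTy → DTy
  | sect : DTy → DTy
  | all : ℕ → DTy → DTy
deriving DecidableEq

def dtysubst (X : ℕ) (B : DTy) : DTy → DTy
  | .tvar Y => if Y = X then B else .tvar Y
  | .lolli A C => .lolli (dtysubst X B A) (dtysubst X B C)
  | .arrow A C => .arrow (dtysubst X B A) (dtysubst X B C)
  | .sect A => .sect (dtysubst X B A)
  | .all Y A => if Y = X then .all Y A else .all Y (dtysubst X B A)

def dftv : DTy → Finset ℕ
  | .tvar X => {X}
  | .lolli A B => dftv A ∪ dftv B
  | .arrow A B => dftv A ∪ dftv B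
  | .sect A => dftv A
  | .all X A => dftv A \ {X}

def dctxFtv (Γ : Ctx DTy) : Set ℕ := {X | ∃ x A, Γ x = some A ∧ X ∈ dftv A}

/-- The DLAL_* type system (Figure 8, plus the rule for `*`). -/
inductive DJ : Ctx DTy → Ctx DTy → DTerm → DTy → Prop
  | weak {Γ Γ' Δ Δ' : Ctx DTy} {t : DTerm} {A : DTy} :
      DJ Γ Δ t A → Ok4 Γ Γ' Δ Δ' → DJ (Ctx.union Γ Γ') (Ctx.union Δ Δ') t A
  | contr {Γ Δ : Ctx DTy} {t : DTerm} {A B : DTy} {x y : ℕ} :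
      DJ (Ctx.union Γ (Ctx.union (Ctx.single x B) (Ctx.single y B))) Δ t A →
      x ≠ y → Γ x = none → Γ y = none → Δ x = none → Δ y = none →
      DJ (Ctx.union Γ (Ctx.single x B)) Δ (drename t y x) A
  | id (x : ℕ) (A : DTy) : DJ Ctx.emp (Ctx.single x A) (.var x) A
  | lolliI {Γ Δ : Ctx DTy} {b : DTerm} {A B : DTy} (x : ℕ) :
      DJ Γ (Ctx.union Δ (Ctx.single x A)) b B → Γ x = none → Δ x = none →
      DJ Γ Δ (.lam x b) (.lolli A B)
  | lolliE {Γ Δ Γ' Δ' : Ctx DTy} {t s : DTerm} {A B : DTy} :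
      DJ Γ Δ t (.lolli A B) → DJ Γ' Δ' s A → Ok4 Γ Γ' Δ Δ' →
      DJ (Ctx.union Γ Γ') (Ctx.union Δ Δ') (.app t s) B
  | arrowI {Γ Δ : Ctx DTy} {b : DTerm} {A B : DTy} (x : ℕ) :
      DJ (Ctx.union Γ (Ctx.single x A)) Δ b B → Γ x = none → Δ x = none →
      DJ Γ Δ (.lam x b) (.arrow A B)
  | arrowE0 {Γ Δ : Ctx DTy} {t s : DTerm} {A B : DTy} :
      DJ Γ Δ t (.arrow A B) → DJ Ctx.emp Ctx.emp s A →
      DJ Γ Δ (.app t s) B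
  | arrowE1 {Γ Δ : Ctx DTy} {t s : DTerm} {A B : DTy} (z : ℕ) (C : DTy) :
      DJ Γ Δ t (.arrow A B) → DJ Ctx.emp (Ctx.single z C) s A →
      Γ z = none → Δ z = none →
      DJ (Ctx.union Γ (Ctx.single z C)) Δ (.app t s) B
  | sectI {Γ Δ : Ctx DTy} {t : DTerm} {A : DTy} :
      DJ Ctx.emp (Ctx.union Γ Δ) t A → Ctx.Disj Γ Δ →
      DJ Γ (fun x => (Δ x).map DTy.sect) t (.sect A)
  | sectE {Γ Δ Γ' Δ' : Ctx DTy} {s t : DTerm} {x : ℕ} {A B : DTy} :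
      DJ Γ Δ s (.sect B) →
      DJ Γ' (Ctx.union Δ' (Ctx.single x (.sect B))) t A →
      Ok4 Γ Γ' Δ Δ' → Γ' x = none → Δ' x = none →
      DJ (Ctx.union Γ Γ') (Ctx.union Δ Δ') (dsubst t x s) A
  | allI {Γ Δ : Ctx DTy} {t : DTerm} {A : DTy} {X : ℕ} :
      DJ Γ Δ t A → X ∉ dctxFtv Γ ∪ dctxFtv Δ → DJ Γ Δ t (.all X A)
  | allE {Γ Δ : Ctx DTy} {t : DTerm} {A : DTy} {X : ℕ} (B : DTy) :
      DJ Γ Δ t (.all X A) → DJ Γ Δ t (dtysubst X B A)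
  | star (X : ℕ) : DJ Ctx.emp Ctx.emp .star (.all X (.tvar X))

/-! ### Reduction of sets of DLAL_* terms -/

/-- One set-reduction step: every term takes one reduction step (normal terms stay). -/
def DSetStep (S T : Set DTerm) : Prop :=
  T = {t | ∃ s ∈ S, DStep s t ∨ (DNormal s ∧ t = s)}

inductive DSetStepN : ℕ → Set DTerm → Set DTerm → Prop
  | zero (S : Set DTerm) : DSetStepN 0 S S
  | succ {n : ℕ} {S T U : Set DTerm} :
      DSetStep S T → DSetStepN n T U → DSetStepN (n + 1) S U

/-- Size of a set of DLAL_* terms: the maximal size of its elements. -/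
noncomputable def ssize (S : Set DTerm) : ℕ := sSup (dsize '' S)

/-! ### Translation of types `(·)⋆ : 𝕋 → 𝕊` (Figure 10) -/

def maxTv : Ty → ℕ
  | .tvar X => X
  | .bit => 0
  | .lolli A B => max (maxTv A) (maxTv B)
  | .arrow A B => max (maxTv A) (maxTv B)
  | .prod A B => max (maxTv A) (maxTv B)
  | .sharp A => maxTv A
  | .sect A => maxTv A
  | .all X A => max X (maxTv A)

/-- `(·)⋆`: translation of PUNQ types to DLAL types. -/
def tstar : Ty → DTy
  | .tvar X => .tvar X
  | .bit => .all 0 (.lolli (.tvar 0) (.lolli (.tvar 0) (.tvar 0)))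
  | .lolli A B => .lolli (tstar A) (tstar B)
  | .arrow A B => .arrow (tstar A) (tstar B)
  | .prod A B =>
      let X := max (maxTv A) (maxTv B) + 1
      .all X (.lolli (.lolli (tstar A) (.lolli (tstar B) (.tvar X))) (.tvar X))
  | .sharp Q => tstar Q
  | .sect A => .sect (tstar A)
  | .all X A => .all X (tstar A)

/-- Pointwise translation of typing contexts. -/
def starCtx (Γ : Ctx Ty) : Ctx DTy := fun x => (Γ x).map tstar

/-! ### Translation of terms `⌊·⌋ : PUNQ → 𝒫(DLAL_*)` (Figure 9) -/

def sApp (S T : Set DTerm) : Set DTerm := {u | ∃ s ∈ S, ∃ t ∈ T, u = .app s t}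

def lamList : List ℕ → DTerm → DTerm
  | [], t => t
  | x :: xs, t => .lam x (lamList xs t)

def appList : DTerm → List ℕ → DTerm
  | t, [] => t
  | t, x :: xs => appList (.app t (.var x)) xs

/-- Apply every element of `S` to elements of `T`, `k` times. -/
def appIter : ℕ → Set DTerm → Set DTerm → Set DTerm
  | 0, S, _ => S
  | k + 1, S, T => sApp (appIter k S T) T

def maxVarD : DTerm → ℕ
  | .var y => y
  | .lam y t => max y (maxVarD t)
  | .app t s => max (maxVarD t) (maxVarD s)
  | .star => 0

/-- Number of free occurrences of `x`. -/
def countOccD (x : ℕ) : DTerm → ℕ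
  | .var y => if y = x then 1 else 0
  | .lam y t => if y = x then 0 else countOccD x t
  | .app t s => countOccD x t + countOccD x s
  | .star => 0

/-- Replace the successive free occurrences of `x` by `base + 0, base + 1, …`,
threading a counter. -/
def dlin (x base : ℕ) : DTerm → ℕ → DTerm × ℕ
  | .var y, c => if y = x then (.var (base + c), c + 1) else (.var y, c)
  | .lam y t, c =>
      if y = x then (.lam y t, c)
      else
        let p := dlin x base t c
        (.lam y p.1, p.2)
  | .app t s, c =>
      let p := dlin x base t c
      let q := dlin x base s p.2
      (.app p.1 q.1, q.2)
  | .star, c => (.star, c)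

/-- Linearization `λx₁…x_k.(s with the occurrences of x split)`. -/
def linOne (x : ℕ) (s : DTerm) : DTerm :=
  lamList ((List.range (countOccD x s)).map fun i => maxVarD s + 1 + i)
    (dlin x (maxVarD s + 1) s 0).1

def linSet (x : ℕ) (S : Set DTerm) : Set DTerm := linOne x '' S

/-- Church pairing `λz.(z s t)` with `z` fresh. -/
def churchPair (s t : DTerm) : DTerm :=
  let z := max (maxVarD s) (maxVarD t) + 1
  .lam z (.app (.app (.var z) s) t)

/-- The translation `⌊·⌋` of PUNQ superpositions into sets of DLAL_* terms
(Figure 9), presented relationally: the list `xs` of λ-closed variables in the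
conditional case and the repetition count `k = η(t₁)` in the application case
are determined by the (implicit) typing derivation and are existentially chosen
here. -/
inductive Tr : Sup → Set DTerm → Prop
  | zero : Tr .zero {DTerm.star}
  | var (x : ℕ) : Tr (.term (.var x)) {DTerm.var x}
  | ket0 : Tr (.term .ket0) {DTerm.lam 0 (.lam 1 (.var 0))}
  | ket1 : Tr (.term .ket1) {DTerm.lam 0 (.lam 1 (.var 1))}
  | smul0 {t : Sup} : Tr (.smul 0 t) {DTerm.star}
  | smul {α : ℂ} {t : Sup} {S : Set DTerm} :
      α ≠ 0 → Tr t S → Tr (.smul α t) S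
  | add {t r : Sup} {S T : Set DTerm} :
      Tr t S → Tr r T → Tr (.add t r) (S ∪ T)
  | pair {t₁ t₂ : Term} {S T : Set DTerm} :
      Tr (.term t₁) S → Tr (.term t₂) T →
      Tr (.term (.pair t₁ t₂)) {u | ∃ s ∈ S, ∃ t ∈ T, u = churchPair s t}
  | lett {x y : ℕ} {t₁ : Term} {b : Sup} {S T : Set DTerm} :
      Tr (.term t₁) S → Tr b T →
      Tr (.term (.lett x y t₁ b)) (sApp S ((fun u => DTerm.lam x (.lam y u)) '' T))
  | cond {t : Term} {s₁ s₂ : Sup} {S S₁ S₂ : Set DTerm} (xs : List ℕ) :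
      Tr (.term t) S → Tr s₁ S₁ → Tr s₂ S₂ →
      Tr (.term (.cond t s₁ s₂))
        ((fun u => appList u xs) '' sApp (sApp S (lamList xs '' S₁)) (lamList xs '' S₂))
  | app {t₁ t₂ : Term} {S T : Set DTerm} (k : ℕ) :
      Tr (.term t₁) S → Tr (.term t₂) T →
      Tr (.term (.app t₁ t₂)) (appIter k S T)
  | lam {x : ℕ} {b : Sup} {B : Set DTerm} :
      Tr b B → Tr (.term (.lam x b)) (linSet x B)


section AuxUnitarity

noncomputable section

/-! ## Stage 1: coefficients -/

lemma coeff_term (v w : Term) : coeff v (.term w) = if v = w then 1 else 0 := rfl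
lemma coeff_zero (v : Term) : coeff v .zero = 0 := rfl
lemma coeff_smul (v : Term) (α : ℂ) (s : Sup) : coeff v (.smul α s) = α * coeff v s := rfl
lemma coeff_add (v : Term) (s t : Sup) : coeff v (.add s t) = coeff v s + coeff v t := rfl

def listCoeff (l : List (ℂ × Term)) (v : Term) : ℂ :=
  (l.map fun p => if v = p.2 then p.1 else 0).sum

lemma coeff_mkSum (l : List (ℂ × Term)) (v : Term) :
    coeff v (mkSum l) = listCoeff l v := by
  induction l with
  | nil => simp [mkSum, coeff_zero, listCoeff]
  | cons p l ih =>
    cases l with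
    | nil => simp [mkSum, listCoeff, coeff_smul, coeff_term, mul_ite]
    | cons q l' =>
      simp only [mkSum, coeff_add, coeff_smul, coeff_term, listCoeff, List.map_cons,
        List.sum_cons, mul_ite] at *
      rw [ih]; simp

lemma coeff_mkSumS (L : List (ℂ × Sup)) (v : Term) :
    coeff v (mkSumS L) = (L.map fun p => p.1 * coeff v p.2).sum := by
  induction L with
  | nil => simp [mkSumS, coeff_zero]
  | cons p L ih =>
    cases L with
    | nil => simp [mkSumS, coeff_smul]
    | cons q L' =>
      simp only [mkSumS, coeff_add, coeff_smul, List.map_cons, List.sum_cons] at *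
      rw [ih]

lemma SupEq.coeff_eq {s t : Sup} (h : SupEq s t) : ∀ v, coeff v s = coeff v t := by
  induction h <;> intro v <;>
    simp_all [coeff_term, coeff_zero, coeff_smul, coeff_add] <;> ring

def termsOf : Sup → List Term
  | .term t => [t]
  | .zero => []
  | .smul _ s => termsOf s
  | .add s t => termsOf s ++ termsOf t

lemma support_termsOf : ∀ (s : Sup) (v : Term), coeff v s ≠ 0 → v ∈ termsOf s
  | .term t, v, h => by
    simp only [coeff_term, ne_eq, ite_eq_right_iff] at h
    simp only [termsOf, List.mem_singleton]
    by_contra hc; exact h (by intro hv; exact absurd hv hc)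
  | .zero, v, h => by simp [coeff_zero] at h
  | .smul α s, v, h => by
    simp only [coeff_smul, ne_eq, mul_eq_zero, not_or] at h
    exact support_termsOf s v h.2
  | .add s t, v, h => by
    simp only [termsOf, List.mem_append]
    by_contra hc
    push_neg at hc
    have h1 : coeff v s = 0 := by
      by_contra h1; exact hc.1 (support_termsOf s v h1)
    have h2 : coeff v t = 0 := by
      by_contra h2; exact hc.2 (support_termsOf t v h2)
    simp [coeff_add, h1, h2] at h

/-! ## Canonical forms and completeness of `SupEq` for coefficient equality -/

def canonC (T : List Term) (c : Term → ℂ) : Sup :=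
  T.foldr (fun v acc => .add (.smul (c v) (.term v)) acc) .zero

lemma canonC_ext {T : List Term} {c c' : Term → ℂ} (h : ∀ v ∈ T, c v = c' v) :
    canonC T c = canonC T c' := by
  induction T with
  | nil => rfl
  | cons v T ih =>
    simp only [canonC, List.foldr_cons] at *
    rw [h v (by simp), ih (fun w hw => h w (by simp [hw]))]

lemma seq_add_zero (t : Sup) : SupEq (.add t .zero) t :=
  .trans (.addComm _ _) (.zeroAdd t)

lemma seq_smul_zero (α : ℂ) : SupEq (.smul α .zero) .zero := by
  refine .trans (.smulCongr α (.symm (.zeroSmul .zero))) (.trans (.smulSmul _ _ _) ?_)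
  rw [mul_zero]; exact .zeroSmul _

lemma seq_interchange (a b x y : Sup) :
    SupEq (.add (.add a b) (.add x y)) (.add (.add a x) (.add b y)) := by
  refine .trans (.addAssoc a b _) (.trans (.addCongr (.refl a) ?_) (.symm (.addAssoc a x _)))
  -- b + (x + y) ≡ x + (b + y)
  refine .trans (.symm (.addAssoc b x y)) (.trans (.addCongr (.addComm b x) (.refl y))
    (.addAssoc x b y))

lemma canonC_zero {T : List Term} {c : Term → ℂ} (h : ∀ v ∈ T, c v = 0) :
    SupEq (canonC T c) .zero := by
  induction T with
  | nil => exact .refl _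
  | cons v T ih =>
    simp only [canonC, List.foldr_cons]
    have h1 : SupEq (Sup.smul (c v) (.term v)) .zero := by
      rw [h v (by simp)]; exact .zeroSmul _
    exact .trans (.addCongr h1 (ih (fun w hw => h w (by simp [hw])))) (.zeroAdd _)

lemma canonC_smul (T : List Term) (α : ℂ) (c : Term → ℂ) :
    SupEq (canonC T (fun v => α * c v)) (.smul α (canonC T c)) := by
  induction T with
  | nil => exact .symm (seq_smul_zero α)
  | cons v T ih =>
    simp only [canonC, List.foldr_cons] at *
    exact .trans (.addCongr (.symm (.smulSmul α (c v) (.term v))) ih)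
      (.symm (.smulDist α _ _))

lemma canonC_add (T : List Term) (c₁ c₂ : Term → ℂ) :
    SupEq (canonC T (fun v => c₁ v + c₂ v)) (.add (canonC T c₁) (canonC T c₂)) := by
  induction T with
  | nil => exact .symm (.zeroAdd _)
  | cons v T ih =>
    simp only [canonC, List.foldr_cons] at *
    exact .trans (.addCongr (.symm (.smulAddSame _ _ _)) ih) (seq_interchange _ _ _ _)

lemma canonC_single {T : List Term} {u : Term} (hT : T.Nodup) (hu : u ∈ T) :
    SupEq (.term u) (canonC T (fun v => if v = u then 1 else 0)) := by
  induction T with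
  | nil => simp at hu
  | cons v T ih =>
    rcases List.nodup_cons.1 hT with ⟨hv, hT'⟩
    simp only [canonC, List.foldr_cons]
    rcases List.mem_cons.1 hu with rfl | hu'
    · have hz : SupEq (canonC T (fun w => if w = u then 1 else 0)) .zero := by
        refine canonC_zero (fun w hw => ?_)
        have hwv : w ≠ u := fun h => hv (h ▸ hw)
        simp [hwv]
      simp only [if_pos rfl]
      exact .symm (.trans (.addCongr (.refl _) hz)
        (.trans (seq_add_zero _) (.oneSmul _)))
    · have hvu : v ≠ u := fun h => hv (h ▸ hu')
      simp only [if_neg hvu]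
      exact .trans (ih hT' hu') (.symm (.trans (.addCongr (.zeroSmul _) (.refl _)) (.zeroAdd _)))

lemma canon_complete : ∀ (s : Sup) (T : List Term), T.Nodup →
    (∀ v ∈ termsOf s, v ∈ T) → SupEq s (canonC T (fun v => coeff v s))
  | .term u, T, hT, hsub => by
    have := canonC_single hT (hsub u (by simp [termsOf]))
    simpa [coeff_term] using this
  | .zero, T, hT, _ => .symm (canonC_zero (fun w _ => rfl))
  | .smul α s, T, hT, hsub => by
    have ih := canon_complete s T hT (fun v hv => hsub v (by simpa [termsOf] using hv))
    have h1 : canonC T (fun v => coeff v (.smul α s)) = canonC T (fun v => α * coeff v s) := rfl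
    rw [h1]
    exact .trans (.smulCongr α ih) (.symm (canonC_smul T α _))
  | .add s t, T, hT, hsub => by
    have ihs := canon_complete s T hT (fun v hv => hsub v (by simp [termsOf, hv]))
    have iht := canon_complete t T hT (fun v hv => hsub v (by simp [termsOf, hv]))
    have h1 : canonC T (fun v => coeff v (.add s t))
        = canonC T (fun v => coeff v s + coeff v t) := rfl
    rw [h1]
    exact .trans (.addCongr ihs iht) (.symm (canonC_add T _ _))

/-- Completeness: coefficient-equal superpositions are vector-space equivalent. -/
lemma supEq_of_coeff_eq {s t : Sup} (h : ∀ v, coeff v s = coeff v t) : SupEq s t := by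
  set T := (termsOf s ++ termsOf t).dedup with hT
  have hnd : T.Nodup := List.nodup_dedup _
  have hs := canon_complete s T hnd (fun v hv => by simp [hT, List.mem_dedup, hv])
  have ht := canon_complete t T hnd (fun v hv => by simp [hT, List.mem_dedup, hv])
  have : canonC T (fun v => coeff v s) = canonC T (fun v => coeff v t) := by
    exact canonC_ext (fun v _ => h v)
  rw [this] at hs
  exact .trans hs (.symm ht)

/-! ## Stage 2: coefficient formulas for the sugar operations -/

lemma coeff_iteS : ∀ (c a b : Sup) (v : Term), coeff v (iteS c a b) =
    (match v with
     | .cond u a' b' => if a' = a ∧ b' = b then coeff u c else 0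
     | _ => 0)
  | .term t, a, b, v => by
    cases v <;> simp only [iteS, coeff_term, coeff_zero] <;> try simp
    case cond u a' b' =>
      by_cases h1 : a' = a <;> by_cases h2 : b' = b <;> by_cases h3 : u = t <;>
        simp [Term.cond.injEq, h1, h2, h3, coeff_term]
  | .zero, a, b, v => by cases v <;> simp [iteS, coeff_zero]
  | .smul α c, a, b, v => by
    have ih := coeff_iteS c a b v
    cases v <;> simp_all [iteS, coeff_smul, mul_ite]
  | .add c d, a, b, v => by
    have ihc := coeff_iteS c a b v
    have ihd := coeff_iteS d a b v
    cases v <;> simp_all [iteS, coeff_add] <;> split <;> simp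

lemma coeff_appSR : ∀ (t : Term) (s : Sup) (v : Term), coeff v (appSR t s) =
    (match v with
     | .app t' u => if t' = t then coeff u s else 0
     | _ => 0)
  | t, .term r, v => by
    cases v <;> simp only [appSR, coeff_term, coeff_zero] <;> try simp
    case app t' u =>
      by_cases h1 : t' = t <;> by_cases h2 : u = r <;>
        simp [Term.app.injEq, h1, h2, coeff_term]
  | t, .zero, v => by cases v <;> simp [appSR, coeff_zero]
  | t, .smul α s, v => by
    have ih := coeff_appSR t s v
    cases v <;> simp_all [appSR, coeff_smul, mul_ite]
  | t, .add s r, v => by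
    have ih1 := coeff_appSR t s v
    have ih2 := coeff_appSR t r v
    cases v <;> simp_all [appSR, coeff_add] <;> split <;> simp

lemma coeff_appS : ∀ (s u : Sup) (v : Term), coeff v (appS s u) =
    (match v with
     | .app a b => coeff a s * coeff b u
     | _ => 0)
  | .term t, u, v => by
    have := coeff_appSR t u v
    cases v <;> simp_all [appS, coeff_term, ite_mul]
  | .zero, u, v => by cases v <;> simp [appS, coeff_zero]
  | .smul α s, u, v => by
    have ih := coeff_appS s u v
    cases v <;> simp_all [appS, coeff_smul] <;> ring
  | .add s r, u, v => by
    have ih1 := coeff_appS s u v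
    have ih2 := coeff_appS r u v
    cases v <;> simp_all [appS, coeff_add] <;> ring

lemma coeff_pairSR : ∀ (t : Term) (s : Sup) (v : Term), coeff v (pairSR t s) =
    (match v with
     | .pair t' u => if t' = t then coeff u s else 0
     | _ => 0)
  | t, .term r, v => by
    cases v <;> simp only [pairSR, coeff_term, coeff_zero] <;> try simp
    case pair t' u =>
      by_cases h1 : t' = t <;> by_cases h2 : u = r <;>
        simp [Term.pair.injEq, h1, h2, coeff_term]
  | t, .zero, v => by cases v <;> simp [pairSR, coeff_zero]
  | t, .smul α s, v => by
    have ih := coeff_pairSR t s v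
    cases v <;> simp_all [pairSR, coeff_smul, mul_ite]
  | t, .add s r, v => by
    have ih1 := coeff_pairSR t s v
    have ih2 := coeff_pairSR t r v
    cases v <;> simp_all [pairSR, coeff_add] <;> split <;> simp

lemma coeff_pairS : ∀ (s u : Sup) (v : Term), coeff v (pairS s u) =
    (match v with
     | .pair a b => coeff a s * coeff b u
     | _ => 0)
  | .term t, u, v => by
    have := coeff_pairSR t u v
    cases v <;> simp_all [pairS, coeff_term, ite_mul]
  | .zero, u, v => by cases v <;> simp [pairS, coeff_zero]
  | .smul α s, u, v => by
    have ih := coeff_pairS s u v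
    cases v <;> simp_all [pairS, coeff_smul] <;> ring
  | .add s r, u, v => by
    have ih1 := coeff_pairS s u v
    have ih2 := coeff_pairS r u v
    cases v <;> simp_all [pairS, coeff_add] <;> ring

lemma coeff_letS : ∀ (x y : ℕ) (c b : Sup) (v : Term), coeff v (letS x y c b) =
    (match v with
     | .lett x' y' u b' => if x' = x ∧ y' = y ∧ b' = b then coeff u c else 0
     | _ => 0)
  | x, y, .term t, b, v => by
    cases v <;> simp only [letS, coeff_term, coeff_zero] <;> try simp
    case lett x' y' u b' =>
      by_cases h1 : x' = x <;> by_cases h2 : y' = y <;> by_cases h3 : b' = b <;>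
        by_cases h4 : u = t <;>
        simp [Term.lett.injEq, h1, h2, h3, h4, coeff_term]
  | x, y, .zero, b, v => by cases v <;> simp [letS, coeff_zero]
  | x, y, .smul α c, b, v => by
    have ih := coeff_letS x y c b v
    cases v <;> simp_all [letS, coeff_smul, mul_ite]
  | x, y, .add c d, b, v => by
    have ih1 := coeff_letS x y c b v
    have ih2 := coeff_letS x y d b v
    cases v <;> simp_all [letS, coeff_add] <;> split <;> simp

/-! ## Stage 3: single-term structural steps -/

inductive TStep : Term → Sup → Prop
  | if0 {s t : Sup} : TStep (.cond .ket0 s t) s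
  | if1 {s t : Sup} : TStep (.cond .ket1 s t) t
  | abs {x : ℕ} {b : Sup} {v : Term} :
      BasisValue v → TStep (.app (.lam x b) v) (substS b x (.term v))
  | lett {x y : ℕ} {v w : Term} {b : Sup} :
      BasisValue v → BasisValue w →
      TStep (.lett x y (.pair v w) b) (substS (substS b x (.term v)) y (.term w))
  | condCong {t : Term} {s r₁ r₂ : Sup} :
      TStep t s → TStep (.cond t r₁ r₂) (iteS s r₁ r₂)
  | appR {r t : Term} {s : Sup} : TStep t s → TStep (.app r t) (appSR r s)
  | appL {t v : Term} {s : Sup} :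
      BasisValue v → TStep t s → TStep (.app t v) (appS s (.term v))
  | pairL {t r : Term} {s : Sup} : TStep t s → TStep (.pair t r) (pairS s (.term r))
  | pairR {v t : Term} {s : Sup} :
      BasisValue v → TStep t s → TStep (.pair v t) (pairS (.term v) s)
  | letCong {x y : ℕ} {t : Term} {s r : Sup} :
      TStep t s → TStep (.lett x y t r) (letS x y s r)

lemma TStep.not_basis {u : Term} {s : Sup} (h : TStep u s) : ¬ BasisValue u := by
  induction h with
  | pairL h ih => intro hb; cases hb; exact ih (by assumption)
  | pairR hb' h ih => intro hb; cases hb; exact ih (by assumption)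
  | _ => intro hb; cases hb

lemma TStep.toStep {u : Term} {s : Sup} (h : TStep u s) : Step (.term u) s := by
  induction h with
  | if0 => exact .if0
  | if1 => exact .if1
  | abs hb => exact .abs hb
  | lett hb hb' => exact .lett hb hb'
  | condCong h ih => exact .condCong ih
  | appR h ih => exact .appR ih
  | appL hb h ih => exact .appL hb ih
  | pairL h ih => exact .pairL ih
  | pairR hb h ih => exact .pairR hb ih
  | letCong h ih => exact .letCong ih

lemma term_coeff_inj {a b : Term} (h : ∀ v, coeff v (.term a) = coeff v (.term b)) :
    a = b := by
  have := h a
  simp only [coeff_term, if_pos rfl] at this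
  by_contra hc
  rw [if_neg hc] at this
  exact one_ne_zero this

lemma listCoeff_of_nodup {L : List (ℂ × Term)} {p : ℂ × Term}
    (hnd : (L.map Prod.snd).Nodup) (hp : p ∈ L) : listCoeff L p.2 = p.1 := by
  induction L with
  | nil => simp at hp
  | cons q L ih =>
    simp only [List.map_cons, List.nodup_cons] at hnd
    rcases List.mem_cons.1 hp with rfl | hp'
    · have : ∀ r ∈ L, (if p.2 = r.2 then r.1 else 0) = 0 := by
        intro r hr
        have : p.2 ≠ r.2 := fun h => hnd.1 (h ▸ List.mem_map_of_mem (f := Prod.snd) hr)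
        simp [this]
      simp only [listCoeff, List.map_cons, List.sum_cons, if_pos rfl]
      rw [List.sum_eq_zero, add_zero]
      · rfl
      intro x hx; rcases List.mem_map.1 hx with ⟨r, hr, rfl⟩; exact this r hr
    · have hne : p.2 ≠ q.2 := by
        intro h; exact hnd.1 (h ▸ List.mem_map_of_mem (f := Prod.snd) hp')
      simp only [listCoeff, List.map_cons, List.sum_cons, if_neg hne, zero_add]
      exact ih hnd.2 hp'

lemma not_basis_cond {t : Term} {a b : Sup} : ¬ BasisValue (.cond t a b) := by rintro ⟨⟩
lemma not_basis_app {t s : Term} : ¬ BasisValue (.app t s) := by rintro ⟨⟩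
lemma not_basis_lett {x y : ℕ} {t : Term} {b : Sup} : ¬ BasisValue (.lett x y t b) := by
  rintro ⟨⟩
lemma coeff_self (u : Term) : coeff u (.term u) = 1 := by simp [coeff_term]

lemma step_support {t s : Sup} (h : Step t s) :
    ∃ u : Term, ¬ BasisValue u ∧ coeff u t ≠ 0 := by
  induction h with
  | @if0 s t => exact ⟨.cond .ket0 s t, ⟨not_basis_cond, by simp [coeff_self]⟩⟩
  | @if1 s t => exact ⟨.cond .ket1 s t, ⟨not_basis_cond, by simp [coeff_self]⟩⟩
  | @abs x b v hb => exact ⟨.app (.lam x b) v, ⟨not_basis_app, by simp [coeff_self]⟩⟩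
  | @lett x y v w b hb hb' =>
    exact ⟨.lett x y (.pair v w) b, ⟨not_basis_lett, by simp [coeff_self]⟩⟩
  | @condCong t s r₁ r₂ h ih =>
    exact ⟨.cond t r₁ r₂, ⟨not_basis_cond, by simp [coeff_self]⟩⟩
  | @appR r t s h ih => exact ⟨.app r t, ⟨not_basis_app, by simp [coeff_self]⟩⟩
  | @appL t v s hb h ih => exact ⟨.app t v, ⟨not_basis_app, by simp [coeff_self]⟩⟩
  | @pairL t r s h ih =>
    refine ⟨.pair t r, ?_, by simp [coeff_self]⟩
    rcases ih with ⟨u, hu, hcu⟩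
    have : u = t := by
      by_contra hc
      simp [coeff_term, hc] at hcu
    subst this
    intro hb; cases hb; exact hu (by assumption)
  | @pairR v t s hb h ih =>
    refine ⟨.pair v t, ?_, by simp [coeff_self]⟩
    rcases ih with ⟨u, hu, hcu⟩
    have : u = t := by
      by_contra hc
      simp [coeff_term, hc] at hcu
    subst this
    intro hbb; cases hbb; exact hu (by assumption)
  | @letCong x y t s r h ih =>
    exact ⟨.lett x y t r, ⟨not_basis_lett, by simp [coeff_self]⟩⟩
  | @sup l w f hl hcf hstep hw ih =>
    rcases List.exists_mem_of_ne_nil l hl with ⟨p, hp⟩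
    have hidx : ∃ i : Fin l.length, l.get i = p := List.mem_iff_get.1 hp
    rcases hidx with ⟨i, hi⟩
    rcases ih i with ⟨u, hu, hcu⟩
    have hut : u = (l.get i).2 := by
      by_contra hc
      rw [coeff_term, if_neg hc] at hcu
      exact hcu rfl
    subst hut
    refine ⟨(l.get i).2, hu, ?_⟩
    rw [coeff_mkSum, listCoeff_of_nodup hcf.1 (by rw [hi]; exact List.mem_append_left _ hp)]
    rw [hi]
    exact hcf.2 p (List.mem_append_left _ hp)
  | equ e hst e' ih =>
    rcases ih with ⟨u, hu, hcu⟩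
    exact ⟨u, hu, by rw [e.coeff_eq]; exact hcu⟩

lemma value_support {v : Sup} (hv : Value v) : ∀ u, coeff u v ≠ 0 → BasisValue u := by
  induction hv with
  | @basis w hb =>
    intro u hu
    have : u = w := by by_contra hc; simp [coeff_term, hc] at hu
    exact this ▸ hb
  | zero => intro u hu; simp [coeff_zero] at hu
  | smul α hs ih =>
    intro u hu
    simp only [coeff_smul, ne_eq, mul_eq_zero, not_or] at hu
    exact ih u hu.2
  | @add s t hs ht ihs iht =>
    intro u hu
    by_cases h1 : coeff u s = 0
    · refine iht u ?_
      intro h2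
      rw [coeff_add, h1, h2, add_zero] at hu
      exact hu rfl
    · exact ihs u h1

lemma value_no_step {v s : Sup} (hv : Value v) : ¬ Step v s := by
  intro h
  rcases step_support h with ⟨u, hu, hcu⟩
  exact hu (value_support hv u hcu)

/-! ## Stage 4: inversion of single-term steps, determinism of `TStep` -/

lemma step_term_inv {t s : Sup} (h : Step t s) : ∀ u : Term,
    (∀ v, coeff v t = coeff v (.term u)) →
    ∃ s', TStep u s' ∧ ∀ v, coeff v s = coeff v s' := by
  induction h with
  | @if0 s₀ t₀ =>
    intro u hu
    obtain rfl := term_coeff_inj hu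
    exact ⟨s₀, .if0, fun v => rfl⟩
  | @if1 s₀ t₀ =>
    intro u hu
    obtain rfl := term_coeff_inj hu
    exact ⟨t₀, .if1, fun v => rfl⟩
  | @abs x b v hb =>
    intro u hu
    obtain rfl := term_coeff_inj hu
    exact ⟨_, .abs hb, fun v => rfl⟩
  | @lett x y v w b hb hb' =>
    intro u hu
    obtain rfl := term_coeff_inj hu
    exact ⟨_, .lett hb hb', fun v => rfl⟩
  | @condCong t₀ s₀ r₁ r₂ h ih =>
    intro u hu
    obtain rfl := term_coeff_inj hu
    obtain ⟨s', hT, hc⟩ := ih t₀ (fun v => rfl)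
    refine ⟨iteS s' r₁ r₂, .condCong hT, fun v => ?_⟩
    rw [coeff_iteS, coeff_iteS]
    cases v <;> simp [hc]
  | @appR r t₀ s₀ h ih =>
    intro u hu
    obtain rfl := term_coeff_inj hu
    obtain ⟨s', hT, hc⟩ := ih t₀ (fun v => rfl)
    refine ⟨appSR r s', .appR hT, fun v => ?_⟩
    rw [coeff_appSR, coeff_appSR]
    cases v <;> simp [hc]
  | @appL t₀ v₀ s₀ hb h ih =>
    intro u hu
    obtain rfl := term_coeff_inj hu
    obtain ⟨s', hT, hc⟩ := ih t₀ (fun v => rfl)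
    refine ⟨appS s' (.term v₀), .appL hb hT, fun v => ?_⟩
    rw [coeff_appS, coeff_appS]
    cases v <;> simp [hc]
  | @pairL t₀ r s₀ h ih =>
    intro u hu
    obtain rfl := term_coeff_inj hu
    obtain ⟨s', hT, hc⟩ := ih t₀ (fun v => rfl)
    refine ⟨pairS s' (.term r), .pairL hT, fun v => ?_⟩
    rw [coeff_pairS, coeff_pairS]
    cases v <;> simp [hc]
  | @pairR v₀ t₀ s₀ hb h ih =>
    intro u hu
    obtain rfl := term_coeff_inj hu
    obtain ⟨s', hT, hc⟩ := ih t₀ (fun v => rfl)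
    refine ⟨pairS (.term v₀) s', .pairR hb hT, fun v => ?_⟩
    rw [coeff_pairS, coeff_pairS]
    cases v <;> simp [hc]
  | @letCong x y t₀ s₀ r h ih =>
    intro u hu
    obtain rfl := term_coeff_inj hu
    obtain ⟨s', hT, hc⟩ := ih t₀ (fun v => rfl)
    refine ⟨letS x y s' r, .letCong hT, fun v => ?_⟩
    rw [coeff_letS, coeff_letS]
    cases v <;> simp [hc]
  | @sup l w f hl hcf hstep hw ih =>
    intro u hu
    have hall : ∀ p ∈ l ++ w, p.2 = u ∧ p.1 = 1 := by
      intro p hp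
      have h1 := listCoeff_of_nodup hcf.1 hp
      have h2 := hu p.2
      rw [coeff_mkSum, h1, coeff_term] at h2
      by_cases hq : p.2 = u
      · rw [if_pos hq] at h2; exact ⟨hq, h2⟩
      · rw [if_neg hq] at h2; exact absurd h2 (hcf.2 p hp)
    cases l with
    | nil => exact absurd rfl hl
    | cons p l' =>
      have hpu := hall p (List.mem_append_left _ (List.mem_cons_self))
      have hrest : l' ++ w = [] := by
        rw [List.eq_nil_iff_forall_not_mem]
        intro q hq
        have hqu := hall q (by
          rcases List.mem_append.1 hq with h' | h'
          · exact List.mem_append_left _ (List.mem_cons_of_mem _ h')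
          · exact List.mem_append_right _ h')
        have hnd := hcf.1
        simp only [List.cons_append, List.map_cons, List.nodup_cons] at hnd
        exact hnd.1 (List.mem_map.2 ⟨q, hq, hqu.1.trans hpu.1.symm⟩)
      obtain ⟨hl', hw'⟩ := List.append_eq_nil_iff.1 hrest
      subst hl'; subst hw'
      obtain ⟨s', hT, hc⟩ := ih ⟨0, by simp⟩ u (by
        intro v
        have : ([p].get ⟨0, by simp⟩).2 = p.2 := rfl
        rw [this, hpu.1])
      refine ⟨s', hT, fun v => ?_⟩
      have hr : List.range [p].length = [0] := rfl
      rw [hr]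
      simp [coeff_add, coeff_mkSumS, coeff_mkSum, listCoeff, hpu.2, hc v]
  | equ e hst e' ih =>
    intro u hu
    obtain ⟨s', hT, hc⟩ := ih u (fun v => by rw [← e.coeff_eq, hu])
    exact ⟨s', hT, fun v => by rw [← e'.coeff_eq]; exact hc v⟩

lemma tstep_det {u : Term} {s : Sup} (h1 : TStep u s) :
    ∀ {s' : Sup}, TStep u s' → ∀ v, coeff v s = coeff v s' := by
  induction h1 with
  | @if0 a b =>
    intro s' h2
    cases h2 with
    | if0 => exact fun v => rfl
    | condCong h => cases h
  | @if1 a b =>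
    intro s' h2
    cases h2 with
    | if1 => exact fun v => rfl
    | condCong h => cases h
  | @abs x b v hb =>
    intro s' h2
    cases h2 with
    | abs hb' => exact fun v => rfl
    | appR h => exact absurd hb h.not_basis
    | appL _ h => cases h
  | @lett x y v w b hb hb' =>
    intro s' h2
    cases h2 with
    | lett _ _ => exact fun v => rfl
    | letCong h =>
      cases h with
      | pairL h => exact absurd hb h.not_basis
      | pairR _ h => exact absurd hb' h.not_basis
  | @condCong t s r₁ r₂ h ih =>
    intro s' h2
    cases h2 with
    | if0 => cases h
    | if1 => cases h
    | condCong h' =>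
      intro v
      rw [coeff_iteS, coeff_iteS]
      cases v <;> simp [ih h']
  | @appR r t s h ih =>
    intro s' h2
    cases h2 with
    | abs hb => exact absurd hb h.not_basis
    | appR h' =>
      intro v
      rw [coeff_appSR, coeff_appSR]
      cases v <;> simp [ih h']
    | appL hb h' => exact absurd hb h.not_basis
  | @appL t v s hb h ih =>
    intro s' h2
    cases h2 with
    | abs hb' => cases h
    | appR h' => exact absurd hb h'.not_basis
    | appL hb' h' =>
      intro vv
      rw [coeff_appS, coeff_appS]
      cases vv <;> simp [ih h']
  | @pairL t r s h ih =>
    intro s' h2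
    cases h2 with
    | pairL h' =>
      intro v
      rw [coeff_pairS, coeff_pairS]
      cases v <;> simp [ih h']
    | pairR hb h' => exact absurd hb h.not_basis
  | @pairR v t s hb h ih =>
    intro s' h2
    cases h2 with
    | pairL h' => exact absurd hb h'.not_basis
    | pairR hb' h' =>
      intro vv
      rw [coeff_pairS, coeff_pairS]
      cases vv <;> simp [ih h']
  | @letCong x y t s r h ih =>
    intro s' h2
    cases h2 with
    | lett hb hb' =>
      cases h with
      | pairL h' => exact absurd hb h'.not_basis
      | pairR _ h' => exact absurd hb' h'.not_basis
    | letCong h' =>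
      intro v
      rw [coeff_letS, coeff_letS]
      cases v <;> simp [ih h']

/-! ## Stage 5: the parallel-step operator on coefficient functions -/

def tstep' (u : Term) : Sup :=
  if h : ∃ s, TStep u s then Classical.choose h else .zero

lemma tstep'_spec {u : Term} {s : Sup} (h : TStep u s) : TStep u (tstep' u) := by
  rw [tstep', dif_pos ⟨s, h⟩]
  exact Classical.choose_spec _

lemma tstep'_coeff {u : Term} {s : Sup} (h : TStep u s) :
    ∀ v, coeff v s = coeff v (tstep' u) :=
  tstep_det h (tstep'_spec h)

def PStep (c : Term → ℂ) : Term → ℂ := fun v =>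
  (∑ᶠ u, if BasisValue u then 0 else c u * coeff v (tstep' u)) +
    (if BasisValue v then c v else 0)

lemma step_term_not_basis {u : Term} {s : Sup} (h : Step (.term u) s) : ¬ BasisValue u := by
  obtain ⟨u', hu', hcu⟩ := step_support h
  have : u' = u := by
    by_contra hc
    rw [coeff_term, if_neg hc] at hcu
    exact hcu rfl
  exact this ▸ hu'

lemma coeff_support_finite (s : Sup) :
    (Function.support (fun u => coeff u s)).Finite :=
  Set.Finite.subset (termsOf s).finite_toSet (fun u hu => support_termsOf s u hu)

lemma listCoeff_append (l w : List (ℂ × Term)) (v : Term) :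
    listCoeff (l ++ w) v = listCoeff l v + listCoeff w v := by
  simp [listCoeff]

lemma listCoeff_eq_zero_of_not_mem {l : List (ℂ × Term)} {v : Term}
    (h : v ∉ l.map Prod.snd) : listCoeff l v = 0 := by
  rw [listCoeff, List.sum_eq_zero]
  intro x hx
  rcases List.mem_map.1 hx with ⟨p, hp, rfl⟩
  have : v ≠ p.2 := fun hv => h (hv ▸ List.mem_map_of_mem (f := Prod.snd) hp)
  simp [this]

lemma mem_of_listCoeff_ne_zero {l : List (ℂ × Term)} {v : Term}
    (h : listCoeff l v ≠ 0) : v ∈ l.map Prod.snd := by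
  by_contra hc; exact h (listCoeff_eq_zero_of_not_mem hc)

lemma range_map_getD {α β : Type*} (l : List α) (d : α) (F : α → β) :
    (List.range l.length).map (fun i => F (l.getD i d)) = l.map F := by
  induction l with
  | nil => rfl
  | cons a l ih =>
    rw [List.length_cons, List.range_succ_eq_map, List.map_cons, List.map_map, List.map_cons]
    have h1 : List.map ((fun i => F ((a :: l).getD i d)) ∘ Nat.succ) (List.range l.length)
        = List.map (fun i => F (l.getD i d)) (List.range l.length) :=
      List.map_congr_left (fun i _ => by simp [Function.comp, List.getD_cons_succ])
    rw [h1, ih, List.getD_cons_zero]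

/-- One-step reduction acts on coefficient functions as `PStep`. -/
lemma step_coeff {t s : Sup} (h : Step t s) :
    ∀ v, coeff v s = PStep (fun u => coeff u t) v := by
  have pstep_term : ∀ {u₀ : Term} {s₀ : Sup}, Step (.term u₀) s₀ →
      ∀ v, coeff v s₀ = PStep (fun w => coeff w (.term u₀)) v := by
    intro u₀ s₀ h₀ v
    obtain ⟨s', hT, hc⟩ := step_term_inv h₀ u₀ (fun _ => rfl)
    have hnb : ¬ BasisValue u₀ := hT.not_basis
    have hfin : (∑ᶠ u, if BasisValue u then 0
        else coeff u (.term u₀) * coeff v (tstep' u)) = coeff v (tstep' u₀) := by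
      rw [finsum_eq_single _ u₀ ?_]
      · simp [hnb, coeff_self]
      · intro w hw
        rw [coeff_term, if_neg hw, zero_mul, ite_self]
    rw [PStep, hfin, hc v, tstep'_coeff hT v]
    have : (if BasisValue v then coeff v (.term u₀) else 0) = 0 := by
      split
      · rw [coeff_term, if_neg]; intro hv; exact hnb (hv ▸ (by assumption))
      · rfl
    rw [this, add_zero]
  induction h with
  | if0 => exact pstep_term .if0
  | if1 => exact pstep_term .if1
  | abs hb => exact pstep_term (.abs hb)
  | lett hb hb' => exact pstep_term (.lett hb hb')
  | condCong h ih => exact pstep_term (.condCong h)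
  | appR h ih => exact pstep_term (.appR h)
  | appL hb h ih => exact pstep_term (.appL hb h)
  | pairL h ih => exact pstep_term (.pairL h)
  | pairR hb h ih => exact pstep_term (.pairR hb h)
  | letCong h ih => exact pstep_term (.letCong h)
  | @sup l w f hl hcf hstep hw ih =>
    intro v
    have hndl : (l.map Prod.snd).Nodup := by
      have := hcf.1
      rw [List.map_append, List.nodup_append] at this
      exact this.1
    have hlnb : ∀ p ∈ l, ¬ BasisValue p.2 := by
      intro p hp
      obtain ⟨i, hi⟩ := List.mem_iff_get.1 hp
      exact hi ▸ step_term_not_basis (hstep i)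
    have hfcoeff : ∀ p ∈ l, ∀ i : Fin l.length, l.get i = p →
        ∀ vv, coeff vv (f i) = coeff vv (tstep' p.2) := by
      intro p hp i hi vv
      obtain ⟨s', hT, hc⟩ := step_term_inv (hstep i) (l.get i).2 (fun _ => rfl)
      rw [hc vv]
      subst hi
      exact tstep'_coeff hT vv
    -- LHS
    have hlhs : coeff v ((mkSumS ((List.range l.length).map
          fun i => ((l.getD i (0, Term.ket0)).1, f i))).add (mkSum w))
        = (l.map fun p => p.1 * coeff v (tstep' p.2)).sum + listCoeff w v := by
      rw [coeff_add, coeff_mkSumS, coeff_mkSum, List.map_map]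
      congr 1
      have hmc : ∀ i ∈ List.range l.length,
          ((fun p => p.1 * coeff v p.2) ∘ fun i => ((l.getD i (0, Term.ket0)).1, f i)) i
          = (fun i => (fun p => p.1 * coeff v (tstep' p.2)) (l.getD i (0, Term.ket0))) i := by
        intro i hi
        have hilt : i < l.length := List.mem_range.1 hi
        have hget : l.getD i (0, Term.ket0) = l.get ⟨i, hilt⟩ := List.getD_eq_get l _ ⟨i, hilt⟩
        simp only [Function.comp]
        rw [hget, hfcoeff (l.get ⟨i, hilt⟩) (l.get_mem _) ⟨i, hilt⟩ rfl v]
      rw [List.map_congr_left hmc, range_map_getD l (0, Term.ket0)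
        (fun p => p.1 * coeff v (tstep' p.2))]
    rw [hlhs]
    -- RHS
    have hsupp : (Function.support fun u => if BasisValue u then 0
        else coeff u (mkSum (l ++ w)) * coeff v (tstep' u)) ⊆ ↑(l.map Prod.snd).toFinset := by
      intro u hu
      simp only [Function.support, Set.mem_setOf_eq] at hu
      by_cases hb : BasisValue u
      · simp [hb] at hu
      · rw [if_neg hb] at hu
        have h1 : coeff u (mkSum (l ++ w)) ≠ 0 := fun h0 => hu (by rw [h0, zero_mul])
        rw [coeff_mkSum] at h1
        have := mem_of_listCoeff_ne_zero h1
        rw [List.map_append, List.mem_append] at this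
        rcases this with h' | h'
        · simpa using h'
        · exfalso
          rcases List.mem_map.1 h' with ⟨p, hp, rfl⟩
          exact hb (hw p hp)
    rw [PStep, finsum_eq_finset_sum_of_support_subset _ hsupp]
    have hsum : ∑ u ∈ (l.map Prod.snd).toFinset, (if BasisValue u then 0
          else coeff u (mkSum (l ++ w)) * coeff v (tstep' u))
        = (l.map fun p => p.1 * coeff v (tstep' p.2)).sum := by
      rw [List.sum_toFinset _ hndl, List.map_map]
      congr 1
      refine List.map_congr_left (fun p hp => ?_)
      simp only [Function.comp]
      rw [if_neg (hlnb p hp), coeff_mkSum,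
        listCoeff_of_nodup hcf.1 (List.mem_append_left _ hp)]
    rw [hsum]
    congr 1
    by_cases hb : BasisValue v
    · rw [if_pos hb, coeff_mkSum, listCoeff_append]
      have : listCoeff l v = 0 := by
        refine listCoeff_eq_zero_of_not_mem (fun hm => ?_)
        rcases List.mem_map.1 hm with ⟨p, hp, rfl⟩
        exact hlnb p hp hb
      rw [this, zero_add]
    · rw [if_neg hb]
      refine listCoeff_eq_zero_of_not_mem (fun hm => ?_)
      rcases List.mem_map.1 hm with ⟨p, hp, rfl⟩
      exact hb (hw p hp)
  | equ e hst e' ih =>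
    intro v
    have h1 : (fun u => coeff u _) = (fun u => coeff u _) := funext e.coeff_eq
    rw [← e'.coeff_eq v, ih v]
    exact congrFun (congrArg PStep (funext fun u => (e.coeff_eq u).symm)) v

/-! ## Stage 6: determinism, linearity, lockstep -/

lemma step_det {t t' s s' : Sup} (h : Step t s) (h' : Step t' s')
    (he : ∀ v, coeff v t = coeff v t') : ∀ v, coeff v s = coeff v s' := by
  intro v
  rw [step_coeff h v, step_coeff h' v]
  exact congrFun (congrArg PStep (funext he)) v

lemma eq_of_coeff_term_ne {u u₀ : Term} (h : coeff u (.term u₀) ≠ 0) : u = u₀ := by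
  by_contra hc
  rw [coeff_term, if_neg hc] at h
  exact h rfl

lemma tstep_exists_of_step_term {u₀ : Term} {s₀ : Sup} (h : Step (.term u₀) s₀) :
    ∃ s', TStep u₀ s' := by
  obtain ⟨s', hT, _⟩ := step_term_inv h u₀ (fun _ => rfl)
  exact ⟨s', hT⟩

lemma step_tstep_exists {t s : Sup} (h : Step t s) :
    ∀ u, coeff u t ≠ 0 → ¬ BasisValue u → ∃ s', TStep u s' := by
  induction h with
  | @sup l w f hl hcf hstep hw ih =>
    intro u hcu hnb
    rw [coeff_mkSum] at hcu
    have := mem_of_listCoeff_ne_zero hcu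
    rw [List.map_append, List.mem_append] at this
    rcases this with h' | h'
    · rcases List.mem_map.1 h' with ⟨p, hp, rfl⟩
      obtain ⟨i, hi⟩ := List.mem_iff_get.1 hp
      exact tstep_exists_of_step_term (hi ▸ hstep i)
    · exfalso
      rcases List.mem_map.1 h' with ⟨p, hp, rfl⟩
      exact hnb (hw p hp)
  | equ e hst e' ih =>
    intro u hcu hnb
    exact ih u (by rw [← e.coeff_eq u]; exact hcu) hnb
  | if0 => exact fun u hcu _ => tstep_exists_of_step_term (eq_of_coeff_term_ne hcu ▸ Step.if0)
  | if1 => exact fun u hcu _ => tstep_exists_of_step_term (eq_of_coeff_term_ne hcu ▸ Step.if1)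
  | abs hb =>
    exact fun u hcu _ => tstep_exists_of_step_term (eq_of_coeff_term_ne hcu ▸ Step.abs hb)
  | lett hb hb' =>
    exact fun u hcu _ => tstep_exists_of_step_term (eq_of_coeff_term_ne hcu ▸ Step.lett hb hb')
  | condCong h ih =>
    exact fun u hcu _ => tstep_exists_of_step_term (eq_of_coeff_term_ne hcu ▸ Step.condCong h)
  | appR h ih =>
    exact fun u hcu _ => tstep_exists_of_step_term (eq_of_coeff_term_ne hcu ▸ Step.appR h)
  | appL hb h ih =>
    exact fun u hcu _ => tstep_exists_of_step_term (eq_of_coeff_term_ne hcu ▸ Step.appL hb h)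
  | pairL h ih =>
    exact fun u hcu _ => tstep_exists_of_step_term (eq_of_coeff_term_ne hcu ▸ Step.pairL h)
  | pairR hb h ih =>
    exact fun u hcu _ => tstep_exists_of_step_term (eq_of_coeff_term_ne hcu ▸ Step.pairR hb h)
  | letCong h ih =>
    exact fun u hcu _ => tstep_exists_of_step_term (eq_of_coeff_term_ne hcu ▸ Step.letCong h)

/-! ### Reduction chains -/

lemma stepN_snoc {m : ℕ} {t s r : Sup} (h : StepN m t s) (h' : Step s r) :
    StepN (m + 1) t r := by
  induction h with
  | zero => exact .succ h' (.zero _)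
  | succ h1 h2 ih => exact .succ h1 (ih h')

lemma stepStar_iff_stepN {t s : Sup} : StepStar t s ↔ ∃ m, StepN m t s := by
  constructor
  · intro h
    induction h with
    | refl => exact ⟨0, .zero _⟩
    | tail h1 h2 ih => exact ⟨ih.choose + 1, stepN_snoc ih.choose_spec h2⟩
  · rintro ⟨m, h⟩
    induction h with
    | zero => exact .refl
    | succ h1 h2 ih => exact .head h1 ih

lemma value_step_contra {t t' s' : Sup} (hv : Value t) (h : Step t' s')
    (he : ∀ v, coeff v t = coeff v t') : False := by
  obtain ⟨u, hnb, hcu⟩ := step_support h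
  exact hnb (value_support hv u (by rw [he u]; exact hcu))

lemma stepN_det : ∀ {a : ℕ} {t V : Sup}, StepN a t V → Value V →
    ∀ {b : ℕ} {t' W : Sup}, StepN b t' W → Value W →
    (∀ v, coeff v t = coeff v t') → ∀ v, coeff v V = coeff v W := by
  intro a
  induction a with
  | zero =>
    intro t V hN hV b t' W hN' hW he
    cases hN
    cases hN' with
    | zero => exact he
    | succ h1 h2 => exact absurd (value_step_contra hV h1 he) not_false
  | succ a ih =>
    intro t V hN hV b t' W hN' hW he
    cases hN with
    | succ h1 h2 =>
      cases hN' with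
      | zero =>
        exact absurd (value_step_contra hW h1 (fun v => (he v).symm)) not_false
      | succ h1' h2' =>
        exact ih h2 hV h2' hW (step_det h1 h1' he)

/-! ### `PStep` is linear and fixes values -/

lemma pstep_fix {c : Term → ℂ} (hb : ∀ u, ¬ BasisValue u → c u = 0) :
    ∀ v, PStep c v = c v := by
  intro v
  rw [PStep]
  have h1 : (∑ᶠ u, if BasisValue u then 0 else c u * coeff v (tstep' u)) = 0 := by
    apply finsum_eq_zero_of_forall_eq_zero
    intro u
    split
    · rfl
    · rw [hb u (by assumption), zero_mul]
  rw [h1, zero_add]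
  split
  · rfl
  · rw [hb v (by assumption)]

lemma value_pstep_fix {W : Sup} (hW : Value W) :
    ∀ v, PStep (fun u => coeff u W) v = coeff v W :=
  pstep_fix (fun u hnb => by
    by_contra hc
    exact hnb (value_support hW u hc))

lemma ite_support_subset (c : Term → ℂ) (F : Term → ℂ) :
    (Function.support fun u => if BasisValue u then 0 else c u * F u)
      ⊆ Function.support c := by
  intro u hu
  simp only [Function.mem_support] at hu ⊢
  intro h0
  apply hu
  rw [h0, zero_mul, ite_self]

lemma pstep_add {c c' : Term → ℂ} (hc : (Function.support c).Finite)
    (hc' : (Function.support c').Finite) :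
    ∀ v, PStep (fun u => c u + c' u) v = PStep c v + PStep c' v := by
  intro v
  rw [PStep, PStep, PStep]
  have key : (fun u => if BasisValue u then 0 else (c u + c' u) * coeff v (tstep' u))
      = fun u => (if BasisValue u then 0 else c u * coeff v (tstep' u))
          + (if BasisValue u then 0 else c' u * coeff v (tstep' u)) := by
    funext u
    split
    · rw [add_zero]
    · rw [add_mul]
  rw [key, finsum_add_distrib
    (Set.Finite.subset hc (ite_support_subset c _))
    (Set.Finite.subset hc' (ite_support_subset c' _))]
  have h2 : (if BasisValue v then c v + c' v else 0)
      = (if BasisValue v then c v else 0) + (if BasisValue v then c' v else 0) := by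
    split <;> simp
  rw [h2]; ring

lemma pstep_smul (a : ℂ) {c : Term → ℂ} (hc : (Function.support c).Finite) :
    ∀ v, PStep (fun u => a * c u) v = a * PStep c v := by
  intro v
  rw [PStep, PStep]
  have key : (fun u => if BasisValue u then 0 else (a * c u) * coeff v (tstep' u))
      = fun u => a * (if BasisValue u then 0 else c u * coeff v (tstep' u)) := by
    funext u
    split
    · rw [mul_zero]
    · rw [mul_assoc]
  rw [key]
  rw [← mul_finsum (fun u => if BasisValue u then 0 else c u * coeff v (tstep' u)) a]
  have h2 : (if BasisValue v then a * c v else 0) = a * (if BasisValue v then c v else 0) := by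
    split
    · rfl
    · rw [mul_zero]
  rw [h2, mul_add]

lemma pstep_zero : ∀ v, PStep (fun _ => (0 : ℂ)) v = 0 :=
  pstep_fix (fun _ _ => rfl)

lemma support_sum_coeff_finite {N : ℕ} (a : Fin N → ℂ) (g : Fin N → Sup) :
    (Function.support fun u => ∑ i, a i * coeff u (g i)).Finite := by
  refine Set.Finite.subset (Set.finite_iUnion (fun i : Fin N =>
    coeff_support_finite (g i))) ?_
  intro u hu
  simp only [Function.mem_support] at hu
  by_contra hc
  simp only [Set.mem_iUnion, Function.mem_support, not_exists, not_not] at hc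
  exact hu (Finset.sum_eq_zero (fun i _ => by rw [hc i, mul_zero]))

lemma pstep_finsum {N : ℕ} (a : Fin N → ℂ) (g : Fin N → Sup) :
    ∀ v, PStep (fun u => ∑ i, a i * coeff u (g i)) v
      = ∑ i, a i * PStep (fun u => coeff u (g i)) v := by
  induction N with
  | zero =>
    intro v
    simp only [Finset.univ_eq_empty, Finset.sum_empty]
    exact pstep_zero v
  | succ N ih =>
    intro v
    have key : (fun u => ∑ i, a i * coeff u (g i))
        = fun u => a 0 * coeff u (g 0) + ∑ i : Fin N, a i.succ * coeff u (g i.succ) := by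
      funext u
      rw [Fin.sum_univ_succ]
    rw [key, pstep_add
      (Set.Finite.subset (coeff_support_finite (g 0)) (fun u hu => by
        simp only [Function.mem_support] at hu ⊢
        intro h0; exact hu (by rw [h0, mul_zero])))
      (support_sum_coeff_finite (fun i : Fin N => a i.succ) (fun i => g i.succ)),
      pstep_smul (a 0) (coeff_support_finite (g 0)),
      ih (fun i : Fin N => a i.succ) (fun i => g i.succ) v, Fin.sum_univ_succ]

/-! ### Canonical support lists -/

def suppList (X : Sup) : List (ℂ × Term) :=
  ((termsOf X).dedup.filter (fun u => coeff u X ≠ 0)).map (fun u => (coeff u X, u))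

lemma suppList_snd (X : Sup) :
    (suppList X).map Prod.snd = (termsOf X).dedup.filter (fun u => coeff u X ≠ 0) := by
  rw [suppList, List.map_map]
  exact List.map_id _

lemma suppList_nodup (X : Sup) : ((suppList X).map Prod.snd).Nodup := by
  rw [suppList_snd]
  exact List.Nodup.filter _ (List.nodup_dedup _)

lemma suppList_mem {X : Sup} {p : ℂ × Term} (hp : p ∈ suppList X) :
    p.1 = coeff p.2 X ∧ coeff p.2 X ≠ 0 := by
  rw [suppList] at hp
  rcases List.mem_map.1 hp with ⟨u, hu, rfl⟩
  have := List.of_mem_filter hu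
  simp only [ne_eq, decide_not, Bool.not_eq_true', decide_eq_false_iff_not] at this
  exact ⟨rfl, this⟩

lemma suppList_mem_of_ne {X : Sup} {v : Term} (hv : coeff v X ≠ 0) :
    (coeff v X, v) ∈ suppList X := by
  rw [suppList]
  refine List.mem_map.2 ⟨v, ?_, rfl⟩
  refine List.mem_filter.2 ⟨List.mem_dedup.2 (support_termsOf X v hv), by simpa using hv⟩

lemma suppList_coeff (X : Sup) (v : Term) : listCoeff (suppList X) v = coeff v X := by
  by_cases hv : coeff v X = 0
  · rw [hv]
    refine listCoeff_eq_zero_of_not_mem (fun hm => ?_)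
    rcases List.mem_map.1 hm with ⟨p, hp, rfl⟩
    exact (suppList_mem hp).2 hv
  · have := listCoeff_of_nodup (suppList_nodup X) (suppList_mem_of_ne hv)
    simpa using this

lemma mkSum_value {L : List (ℂ × Term)} (h : ∀ p ∈ L, BasisValue p.2) :
    Value (mkSum L) := by
  induction L with
  | nil => exact .zero
  | cons p L ih =>
    cases L with
    | nil => exact .smul _ (.basis (h p (by simp)))
    | cons q L' =>
      exact .add (.smul _ (.basis (h p (by simp))))
        (ih (fun r hr => h r (List.mem_cons_of_mem _ hr)))

/-! ## Stage 7: constructing reduction steps, lockstep normalization -/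

lemma listCoeff_perm {l l' : List (ℂ × Term)} (h : l.Perm l') (v : Term) :
    listCoeff l v = listCoeff l' v :=
  List.Perm.sum_eq (h.map _)

lemma step_construct' {T : Sup} {c : Term → ℂ} (hT : ∀ v, coeff v T = c v)
    (hne : ∃ u, ¬ BasisValue u ∧ c u ≠ 0)
    (hts : ∀ u, ¬ BasisValue u → c u ≠ 0 → ∃ s, TStep u s) :
    ∃ Y : Sup, Step T Y ∧ ∀ v, coeff v Y = PStep c v := by
  classical
  set l := (suppList T).filter (fun p => !(decide (BasisValue p.2))) with hl
  set w := (suppList T).filter (fun p => decide (BasisValue p.2)) with hwdef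
  have hperm : (l ++ w).Perm (suppList T) := by
    refine List.Perm.trans (List.perm_append_comm) ?_
    exact List.filter_append_perm _ _
  have hmeml : ∀ p ∈ l, p ∈ suppList T ∧ ¬ BasisValue p.2 := by
    intro p hp
    have := List.mem_filter.1 hp
    refine ⟨this.1, ?_⟩
    simpa using this.2
  have hmemw : ∀ p ∈ w, BasisValue p.2 := by
    intro p hp
    have := List.mem_filter.1 hp
    simpa using this.2
  have hcf : CForm (l ++ w) := by
    constructor
    · exact (List.Perm.nodup_iff (hperm.map Prod.snd)).2 (suppList_nodup T)
    · intro p hp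
      have hmem : p ∈ suppList T := hperm.mem_iff.1 hp
      have := suppList_mem hmem
      rw [this.1]
      exact this.2
  have hlc : ∀ v, listCoeff (l ++ w) v = c v := by
    intro v
    rw [listCoeff_perm hperm v, suppList_coeff T v, hT v]
  have hlne : l ≠ [] := by
    obtain ⟨u, hnb, hcu⟩ := hne
    have hmem : (coeff u T, u) ∈ suppList T := suppList_mem_of_ne (by rw [hT u]; exact hcu)
    have : (coeff u T, u) ∈ l := by
      rw [hl]
      exact List.mem_filter.2 ⟨hmem, by simpa using hnb⟩
    exact List.ne_nil_of_mem this
  set f : ℕ → Sup := fun i => tstep' ((l.getD i (0, Term.ket0)).2) with hf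
  have hstep : ∀ i : Fin l.length, Step (.term (l.get i).2) (f i.val) := by
    intro i
    have hp : l.get i ∈ l := l.get_mem i
    obtain ⟨hmem, hnb⟩ := hmeml _ hp
    have hc0 : c (l.get i).2 ≠ 0 := by
      have := suppList_mem hmem
      rw [← hT (l.get i).2]
      exact this.2
    obtain ⟨s, hTs⟩ := hts _ hnb hc0
    have : TStep (l.get i).2 (tstep' (l.get i).2) := tstep'_spec hTs
    have hg : (l.getD i.val (0, Term.ket0)) = l.get i := List.getD_eq_get l _ i
    rw [hf]
    simp only [hg]
    exact this.toStep
  have hst := Step.sup l w f hlne hcf hstep hmemw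
  refine ⟨_, Step.equ (supEq_of_coeff_eq (fun v => by rw [hT v, ← hlc v, coeff_mkSum]))
    hst (SupEq.refl _), fun v => ?_⟩
  rw [step_coeff hst v]
  refine congrFun (congrArg PStep (funext fun u => ?_)) v
  rw [coeff_mkSum, hlc]

lemma step_construct {T Y : Sup} {c : Term → ℂ} (hT : ∀ v, coeff v T = c v)
    (hne : ∃ u, ¬ BasisValue u ∧ c u ≠ 0)
    (hts : ∀ u, ¬ BasisValue u → c u ≠ 0 → ∃ s, TStep u s)
    (hY : ∀ v, coeff v Y = PStep c v) : Step T Y := by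
  obtain ⟨Y₀, hst, hc0⟩ := step_construct' hT hne hts
  exact .equ (.refl T) hst (supEq_of_coeff_eq fun v => by rw [hc0 v, ← hY v])

lemma pstep_iter_fix {c : ℕ → Term → ℂ} (hPS : ∀ j v, PStep (c j) v = c (j + 1) v)
    {j₀ : ℕ} (hb : ∀ u, ¬ BasisValue u → c j₀ u = 0) :
    ∀ j, j₀ ≤ j → ∀ v, c j v = c j₀ v := by
  intro j hj
  induction j, hj using Nat.le_induction with
  | base => intro v; rfl
  | succ j hj ihj =>
    intro v
    rw [← hPS j v, show c j = c j₀ from funext ihj]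
    exact pstep_fix hb v

lemma lockstep : ∀ (K : ℕ) (c : ℕ → Term → ℂ) (X : Sup),
    (∀ v, coeff v X = c 0 v) →
    (∀ j v, PStep (c j) v = c (j + 1) v) →
    (∀ j u, ¬ BasisValue u → c j u ≠ 0 → ∃ s, TStep u s) →
    (∀ u, ¬ BasisValue u → c K u = 0) →
    (∃ u, ¬ BasisValue u ∧ c 0 u ≠ 0) →
    ∀ W : Sup, (∀ v, coeff v W = c K v) → StepStar X W := by
  intro K
  induction K with
  | zero =>
    intro c X hX hPS hts hbs hne W hW
    obtain ⟨u, hnb, hc⟩ := hne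
    exact absurd (hbs u hnb) hc
  | succ K ih =>
    intro c X hX hPS hts hbs hne W hW
    by_cases hb1 : ∀ u, ¬ BasisValue u → c 1 u = 0
    · have hKfix := pstep_iter_fix hPS hb1 (K + 1) (by omega)
      have hstep : Step X W :=
        step_construct hX hne (hts 0) (fun v => by rw [hW v, hKfix v, hPS 0 v])
      exact Relation.ReflTransGen.single hstep
    · push_neg at hb1
      obtain ⟨u, hnb, hne1⟩ := hb1
      obtain ⟨Y, hstep, hYc⟩ := step_construct' hX hne (hts 0)
      have hY0 : ∀ v, coeff v Y = c 1 v := fun v => by rw [hYc v, hPS 0 v]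
      exact Relation.ReflTransGen.head hstep
        (ih (fun j => c (j + 1)) Y hY0 (fun j v => hPS (j + 1) v) (fun j => hts (j + 1))
          hbs ⟨u, hnb, hne1⟩ W hW)

/-! ## Stage 8: linear big-step normalization -/

lemma stepN_chain : ∀ {m : ℕ} {t V : Sup}, StepN m t V →
    ∃ g : ℕ → Sup, g 0 = t ∧ (∀ j, m ≤ j → g j = V) ∧
      (∀ j, j < m → Step (g j) (g (j + 1))) := by
  intro m t V h
  induction h with
  | zero t =>
    exact ⟨fun _ => t, rfl, fun j _ => rfl, fun j hj => absurd hj (Nat.not_lt_zero j)⟩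
  | @succ n t s r h1 h2 ih =>
    obtain ⟨g, hg0, hgV, hgs⟩ := ih
    refine ⟨fun j => Nat.casesOn j t g, rfl, ?_, ?_⟩
    · intro j hj
      cases j with
      | zero => omega
      | succ j' => exact hgV j' (by omega)
    · intro j hj
      cases j with
      | zero => simpa [hg0] using h1
      | succ j' => exact hgs j' (by omega)

lemma stepStar_det {t V W : Sup} (h1 : StepStar t V) (hV : Value V)
    (h2 : StepStar t W) (hW : Value W) : ∀ v, coeff v V = coeff v W := by
  obtain ⟨a, hN1⟩ := stepStar_iff_stepN.1 h1
  obtain ⟨b, hN2⟩ := stepStar_iff_stepN.1 h2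
  exact stepN_det hN1 hV hN2 hW (fun _ => rfl)

lemma value_of_basis_fn (c : Term → ℂ) (hfin : (Function.support c).Finite)
    (hb : ∀ u, ¬ BasisValue u → c u = 0) :
    ∃ W : Sup, Value W ∧ ∀ v, coeff v W = c v := by
  classical
  set L : List (ℂ × Term) := hfin.toFinset.toList.map (fun u => (c u, u)) with hL
  have hsnd : L.map Prod.snd = hfin.toFinset.toList := by
    rw [hL, List.map_map]
    exact List.map_id _
  have hnd : (L.map Prod.snd).Nodup := by rw [hsnd]; exact Finset.nodup_toList _
  refine ⟨mkSum L, mkSum_value ?_, ?_⟩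
  · intro p hp
    rcases List.mem_map.1 hp with ⟨u, hu, rfl⟩
    have : c u ≠ 0 := by
      have := Finset.mem_toList.1 hu
      simpa using this
    by_contra hnb
    exact this (hb u hnb)
  · intro v
    rw [coeff_mkSum]
    by_cases hv : c v = 0
    · rw [hv]
      refine listCoeff_eq_zero_of_not_mem (fun hm => ?_)
      rw [hsnd] at hm
      have := Finset.mem_toList.1 hm
      simp only [Set.Finite.mem_toFinset, Function.mem_support] at this
      exact this hv
    · have hmem : ((c v, v) : ℂ × Term) ∈ L := by
        rw [hL]
        exact List.mem_map.2 ⟨v, Finset.mem_toList.2 (by simpa using hv), rfl⟩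
      simpa using listCoeff_of_nodup hnd hmem

/-- Master lemma: reduction acts linearly. -/
lemma linear_normalize {N : ℕ} (α : Fin N → ℂ) (U : Fin N → Term) (Wit : Fin N → Sup)
    (hwit : ∀ i, StepStar (.term (U i)) (Wit i)) (hval : ∀ i, Value (Wit i))
    (X : Sup) (hX : ∀ u, coeff u X = ∑ i, α i * coeff u (.term (U i)))
    (hne : ∃ u, ¬ BasisValue u ∧ coeff u X ≠ 0)
    (W : Sup) (hW : ∀ v, coeff v W = ∑ i, α i * coeff v (Wit i)) :
    StepStar X W := by
  classical
  choose m hm using fun i => stepStar_iff_stepN.1 (hwit i)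
  choose g hg0 hgV hgs using fun i => stepN_chain (hm i)
  set K := Finset.univ.sup m with hK
  set c : ℕ → Term → ℂ := fun j u => ∑ i, α i * coeff u (g i j) with hc
  have hgK : ∀ i, g i K = Wit i := fun i => hgV i K (Finset.le_sup (Finset.mem_univ i))
  refine lockstep K c X ?_ ?_ ?_ ?_ ?_ W ?_
  · intro v
    rw [hX v, hc]
    exact Finset.sum_congr rfl (fun i _ => by rw [hg0 i])
  · intro j v
    rw [hc]
    rw [pstep_finsum α (fun i => g i j) v]
    refine Finset.sum_congr rfl (fun i _ => ?_)
    rcases Nat.lt_or_ge j (m i) with hj | hj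
    · rw [← step_coeff (hgs i j hj) v]
    · rw [hgV i j hj, hgV i (j + 1) (by omega)]
      rw [value_pstep_fix (hval i) v]
  · intro j u hnb hcu
    rw [hc] at hcu
    obtain ⟨i, _, hi⟩ := Finset.exists_ne_zero_of_sum_ne_zero hcu
    have hcg : coeff u (g i j) ≠ 0 := fun h0 => hi (by rw [h0, mul_zero])
    rcases Nat.lt_or_ge j (m i) with hj | hj
    · exact step_tstep_exists (hgs i j hj) u hcg hnb
    · exfalso
      rw [hgV i j hj] at hcg
      exact hnb (value_support (hval i) u hcg)
  · intro u hnb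
    rw [hc]
    refine Finset.sum_eq_zero (fun i _ => ?_)
    rw [hgK i]
    have : coeff u (Wit i) = 0 := by
      by_contra hc0
      exact hnb (value_support (hval i) u hc0)
    rw [this, mul_zero]
  · obtain ⟨u, hnb, hcu⟩ := hne
    refine ⟨u, hnb, fun h0 => hcu ?_⟩
    rw [hX u]
    calc ∑ i, α i * coeff u (Sup.term (U i))
        = ∑ i, α i * coeff u (g i 0) := Finset.sum_congr rfl (fun i _ => by rw [hg0 i])
      _ = 0 := h0
  · intro v
    rw [hW v, hc]
    exact Finset.sum_congr rfl (fun i _ => by rw [hgK i])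

/-! ## Stage 9: kets and the semantics of `♯(𝔹ⁿ)` -/

lemma ketBit_basis (b : Bool) : BasisValue (ketBit b) := by
  cases b
  · exact .ket0
  · exact .ket1

lemma ketN_basis : ∀ (n i : ℕ), BasisValue (ketN n i)
  | 0, _ => .ket0
  | 1, i => ketBit_basis _
  | n + 2, i => .pair (ketBit_basis _) (ketN_basis (n + 1) i)

lemma fvT_ketBit (b : Bool) : fvT (ketBit b) = ∅ := by cases b <;> rfl

lemma fvT_ketN : ∀ (n i : ℕ), fvT (ketN n i) = ∅
  | 0, _ => rfl
  | 1, i => fvT_ketBit _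
  | n + 2, i => by
    show fvT (.pair (ketBit _) (ketN (n + 1) i)) = ∅
    rw [show fvT (.pair (ketBit (i.testBit (n+1))) (ketN (n + 1) i))
      = fvT (ketBit (i.testBit (n+1))) ∪ fvT (ketN (n + 1) i) from rfl,
      fvT_ketBit, fvT_ketN (n + 1) i]
    rfl

lemma ketBit_inj {a b : Bool} (h : ketBit a = ketBit b) : a = b := by
  cases a <;> cases b <;> simp_all [ketBit]

lemma ketN_testBit_eq : ∀ n, 1 ≤ n → ∀ i j : ℕ, ketN n i = ketN n j →
    ∀ t, t < n → i.testBit t = j.testBit t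
  | 0, h => by omega
  | 1, _ => by
    intro i j h t ht
    have ht0 : t = 0 := by omega
    subst ht0
    exact ketBit_inj h
  | n + 2, _ => by
    intro i j h t ht
    have h1 : ketBit (i.testBit (n + 1)) = ketBit (j.testBit (n + 1))
        ∧ ketN (n + 1) i = ketN (n + 1) j := by
      have := h
      rw [show ketN (n+2) i = .pair (ketBit (i.testBit (n+1))) (ketN (n+1) i) from rfl,
        show ketN (n+2) j = .pair (ketBit (j.testBit (n+1))) (ketN (n+1) j) from rfl,
        Term.pair.injEq] at this
      exact this
    rcases Nat.lt_or_ge t (n + 1) with ht' | ht'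
    · exact ketN_testBit_eq (n + 1) (by omega) i j h1.2 t ht'
    · have : t = n + 1 := by omega
      subst this
      exact ketBit_inj h1.1

lemma ketN_inj {n : ℕ} (hn : 1 ≤ n) {i j : ℕ} (hi : i < 2 ^ n) (hj : j < 2 ^ n)
    (h : ketN n i = ketN n j) : i = j := by
  refine Nat.eq_of_testBit_eq (fun t => ?_)
  rcases Nat.lt_or_ge t n with ht | ht
  · exact ketN_testBit_eq n hn i j h t ht
  · have h2 : (2 : ℕ) ^ n ≤ 2 ^ t := Nat.pow_le_pow_right (by omega) ht
    rw [Nat.testBit_eq_false_of_lt (by omega), Nat.testBit_eq_false_of_lt (by omega)]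

lemma ketN_congr : ∀ (n i j : ℕ), (∀ t, t < n → i.testBit t = j.testBit t) →
    ketN n i = ketN n j
  | 0, _, _, _ => rfl
  | 1, i, j, h => by
    show ketBit (i.testBit 0) = ketBit (j.testBit 0)
    rw [h 0 (by omega)]
  | n + 2, i, j, h => by
    show Term.pair (ketBit (i.testBit (n+1))) (ketN (n+1) i)
        = .pair (ketBit (j.testBit (n+1))) (ketN (n+1) j)
    rw [h (n + 1) (by omega), ketN_congr (n + 1) i j (fun t ht => h t (by omega))]

lemma ketN_mod (n i : ℕ) : ketN n (i % 2 ^ n) = ketN n i := by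
  refine ketN_congr n _ _ (fun t ht => ?_)
  rw [Nat.testBit_mod_two_pow]
  simp [ht]

lemma sem_bits_aux (m : ℕ)
    (IH : sem (bitsTy (m + 1)) emptyVal
      = {s | ∃ i, i < 2 ^ (m + 1) ∧ s = .term (ketN (m + 1) i)}) (s : Sup) :
    (∃ v ∈ sem .bit emptyVal, ∃ w ∈ sem (bitsTy (m + 1)) emptyVal, s = pairS v w) ↔
      ∃ i, i < 2 ^ (m + 2) ∧ s = .term (ketN (m + 2) i) := by
  have hpow : (2 : ℕ) ^ (m + 2) = 2 ^ (m + 1) * 2 := by rw [pow_succ]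
  constructor
  · rintro ⟨v, hv, w, hw, rfl⟩
    rw [IH] at hw
    obtain ⟨j, hj, rfl⟩ := hw
    have hv' : v = .term .ket0 ∨ v = .term .ket1 := hv
    have : ∃ b : Bool, v = .term (ketBit b) := by
      rcases hv' with rfl | rfl
      · exact ⟨false, rfl⟩
      · exact ⟨true, rfl⟩
    obtain ⟨b, rfl⟩ := this
    refine ⟨if b then 2 ^ (m + 1) + j else j, by cases b <;> simp <;> omega, ?_⟩
    have htb : (if b then 2 ^ (m + 1) + j else j).testBit (m + 1) = b := by
      cases b
      · simpa using Nat.testBit_eq_false_of_lt hj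
      · simp [Nat.testBit_two_pow_add_eq, Nat.testBit_eq_false_of_lt hj]
    have hket : ketN (m + 1) (if b then 2 ^ (m + 1) + j else j) = ketN (m + 1) j := by
      refine ketN_congr _ _ _ (fun t ht => ?_)
      cases b
      · rfl
      · simpa using Nat.testBit_two_pow_add_gt ht j
    show pairS (Sup.term (ketBit b)) (Sup.term (ketN (m + 1) j))
      = .term (ketN (m + 2) (if b then 2 ^ (m + 1) + j else j))
    rw [show ketN (m + 2) (if b then 2 ^ (m + 1) + j else j)
      = .pair (ketBit ((if b then 2 ^ (m + 1) + j else j).testBit (m + 1)))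
        (ketN (m + 1) (if b then 2 ^ (m + 1) + j else j)) from rfl, htb, hket]
    rfl
  · rintro ⟨i, hi, rfl⟩
    refine ⟨.term (ketBit (i.testBit (m + 1))), ?_, .term (ketN (m + 1) (i % 2 ^ (m + 1))),
      ?_, ?_⟩
    · cases i.testBit (m + 1)
      · exact Or.inl rfl
      · exact Or.inr rfl
    · rw [IH]
      exact ⟨i % 2 ^ (m + 1), Nat.mod_lt _ (by positivity), rfl⟩
    · show Sup.term (ketN (m + 2) i)
        = pairS (.term (ketBit (i.testBit (m + 1)))) (.term (ketN (m + 1) (i % 2 ^ (m + 1))))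
      rw [show (pairS (.term (ketBit (i.testBit (m + 1))))
          (.term (ketN (m + 1) (i % 2 ^ (m + 1)))) : Sup)
        = .term (.pair (ketBit (i.testBit (m + 1))) (ketN (m + 1) (i % 2 ^ (m + 1)))) from rfl,
        ketN_mod]
      rfl

lemma sem_bits : ∀ n, 1 ≤ n →
    sem (bitsTy n) emptyVal = {s | ∃ i, i < 2 ^ n ∧ s = .term (ketN n i)}
  | 0, h => by omega
  | 1, _ => by
    ext s
    simp only [bitsTy, sem, Set.mem_insert_iff, Set.mem_singleton_iff, Set.mem_setOf_eq]
    constructor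
    · rintro (rfl | rfl)
      · exact ⟨0, by omega, by rfl⟩
      · exact ⟨1, by omega, by rfl⟩
    · rintro ⟨i, hi, rfl⟩
      interval_cases i
      · left; rfl
      · right; rfl
  | n + 2, _ => by
    have IH := sem_bits (n + 1) (by omega)
    ext s
    rw [show bitsTy (n + 2) = .prod .bit (bitsTy (n + 1)) from rfl]
    show (∃ v ∈ sem .bit emptyVal, ∃ w ∈ sem (bitsTy (n + 1)) emptyVal, s = pairS v w) ↔ _
    rw [sem_bits_aux n IH s]
    rfl

/-! ## Stage 10: inner products on ket-supported values -/

lemma inn_term (v : Term) (w : Sup) : inn (.term v) w = coeff v w := rfl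

lemma inn_support_finite (s w : Sup) :
    (Function.support fun v => (starRingEnd ℂ) (coeff v s) * coeff v w).Finite := by
  refine Set.Finite.subset (coeff_support_finite s) (fun v hv => ?_)
  simp only [Function.mem_support] at hv ⊢
  intro h0
  exact hv (by rw [h0, map_zero, zero_mul])

lemma inn_eq_finsum : ∀ (s w : Sup),
    inn s w = ∑ᶠ v, (starRingEnd ℂ) (coeff v s) * coeff v w
  | .term t, w => by
    rw [inn_term, finsum_eq_single _ t ?_]
    · simp [coeff_self]
    · intro v hv
      rw [coeff_term, if_neg hv, map_zero, zero_mul]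
  | .zero, w => by
    show (0 : ℂ) = _
    symm
    apply finsum_eq_zero_of_forall_eq_zero
    intro v
    rw [coeff_zero, map_zero, zero_mul]
  | .smul α s, w => by
    show (starRingEnd ℂ) α * inn s w = _
    rw [inn_eq_finsum s w,
      mul_finsum (fun v => (starRingEnd ℂ) (coeff v s) * coeff v w) _]
    exact finsum_congr (fun v => by rw [coeff_smul, map_mul]; ring)
  | .add s t, w => by
    show inn s w + inn t w = _
    rw [inn_eq_finsum s w, inn_eq_finsum t w,
      ← finsum_add_distrib (inn_support_finite s w) (inn_support_finite t w)]
    congr 1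
    funext v
    rw [coeff_add, map_add, add_mul]

lemma inn_self_eq_sum {n : ℕ} (hn : 1 ≤ n) {w : Sup}
    (hsupp : ∀ u, coeff u w ≠ 0 → ∃ i, i < 2 ^ n ∧ u = ketN n i) :
    inn w w = ∑ i : Fin (2 ^ n),
      (starRingEnd ℂ) (coeff (ketN n i.val) w) * coeff (ketN n i.val) w := by
  classical
  rw [inn_eq_finsum]
  have hsub : (Function.support fun v => (starRingEnd ℂ) (coeff v w) * coeff v w)
      ⊆ ↑(Finset.univ.image (fun i : Fin (2 ^ n) => ketN n i.val)) := by
    intro v hv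
    simp only [Function.mem_support] at hv
    have hc : coeff v w ≠ 0 := fun h0 => hv (by rw [h0, map_zero, zero_mul])
    obtain ⟨i, hi, rfl⟩ := hsupp v hc
    simp only [Finset.coe_image, Set.mem_image, Finset.mem_coe, Finset.mem_univ]
    exact ⟨⟨i, hi⟩, by simp⟩
  rw [finsum_eq_finset_sum_of_support_subset _ hsub]
  rw [Finset.sum_image (fun i _ j _ h => Fin.ext (ketN_inj hn i.isLt j.isLt h))]

lemma sharp_supp {n : ℕ} (hn : 1 ≤ n) {w : Sup}
    (hw : w ∈ sem (.sharp (bitsTy n)) emptyVal) :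
    ∀ u, coeff u w ≠ 0 → ∃ i, i < 2 ^ n ∧ u = ketN n i := by
  obtain ⟨⟨l, hl, heq⟩, hS1⟩ := hw
  intro u hu
  rw [heq.coeff_eq u, coeff_mkSumS] at hu
  have : ∃ p ∈ l, p.1 * coeff u p.2 ≠ 0 := by
    by_contra hc
    push_neg at hc
    refine hu (List.sum_eq_zero (fun x hx => ?_))
    obtain ⟨p, hp, rfl⟩ := List.mem_map.1 hx
    exact hc p hp
  obtain ⟨p, hp, hne⟩ := this
  have hp2 := hl p hp
  rw [sem_bits n hn] at hp2
  obtain ⟨i, hi, hpe⟩ := hp2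
  have hcu : coeff u p.2 ≠ 0 := fun h0 => hne (by rw [h0, mul_zero])
  rw [hpe, coeff_term] at hcu
  by_cases he : u = ketN n i
  · exact ⟨i, hi, he⟩
  · rw [if_neg he] at hcu
    exact absurd rfl hcu

lemma sharp_norm_one {n : ℕ} (hn : 1 ≤ n) {w : Sup}
    (hw : w ∈ sem (.sharp (bitsTy n)) emptyVal) :
    ∑ i : Fin (2 ^ n),
      (starRingEnd ℂ) (coeff (ketN n i.val) w) * coeff (ketN n i.val) w = 1 := by
  have h1 := inn_self_eq_sum hn (sharp_supp hn hw)
  have habs : ‖inn w w‖ ^ 2 = 1 := hw.2.2.2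
  have h3 : inn w w
      = ((∑ i : Fin (2 ^ n), Complex.normSq (coeff (ketN n i.val) w) : ℝ) : ℂ) := by
    rw [h1]
    push_cast
    exact Finset.sum_congr rfl (fun i _ => Complex.normSq_eq_conj_mul_self.symm)
  set r : ℝ := ∑ i : Fin (2 ^ n), Complex.normSq (coeff (ketN n i.val) w) with hr
  have hrnn : 0 ≤ r := Finset.sum_nonneg (fun i _ => Complex.normSq_nonneg _)
  have habs2 : ‖((r : ℝ) : ℂ)‖ = r := by
    rw [Complex.norm_real, Real.norm_of_nonneg hrnn]
  rw [h3, habs2] at habs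
  have hr1 : r = 1 := by nlinarith
  rw [← h1, h3, hr1]
  norm_num

lemma fvS_mkSum : ∀ (L : List (ℂ × Term)), (∀ p ∈ L, fvT p.2 = ∅) → fvS (mkSum L) = ∅
  | [], _ => rfl
  | [p], h => by
    show fvS (.smul p.1 (.term p.2)) = ∅
    show fvS (.term p.2) = ∅
    show fvT p.2 = ∅
    exact h p (by simp)
  | p :: q :: L, h => by
    show fvS (.smul p.1 (.term p.2)) ∪ fvS (mkSum (q :: L)) = ∅
    rw [fvS_mkSum (q :: L) (fun r hr => h r (List.mem_cons_of_mem _ hr))]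
    have : fvS (.smul p.1 (.term p.2)) = fvT p.2 := rfl
    rw [this, h p (by simp)]
    rfl

lemma coeff_mkSumS_term (L : List (ℂ × Term)) (v : Term) :
    coeff v (mkSumS (L.map fun p => (p.1, Sup.term p.2))) = listCoeff L v := by
  rw [coeff_mkSumS, List.map_map, listCoeff]
  congr 1
  refine List.map_congr_left (fun p _ => ?_)
  simp [Function.comp, coeff_term, mul_ite]

lemma mk_vec {n : ℕ} (hn : 1 ≤ n) (α : Fin (2 ^ n) → ℂ)
    (hnorm : ∑ i, (starRingEnd ℂ) (α i) * α i = 1) :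
    ∃ V : Sup, V ∈ sem (.sharp (bitsTy n)) emptyVal ∧
      (∀ i : Fin (2 ^ n), coeff (ketN n i.val) V = α i) ∧
      (∀ u, coeff u V ≠ 0 → ∃ i : Fin (2 ^ n), u = ketN n i.val) := by
  classical
  have hinj : Function.Injective (fun i : Fin (2 ^ n) => ketN n i.val) :=
    fun i j h => Fin.ext (ketN_inj hn i.isLt j.isLt h)
  set L : List (ℂ × Term) := (List.finRange (2 ^ n)).map (fun i => (α i, ketN n i.val))
    with hL
  have hsnd : L.map Prod.snd = (List.finRange (2 ^ n)).map (fun i => ketN n i.val) := by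
    rw [hL, List.map_map]
    rfl
  have hnd : (L.map Prod.snd).Nodup := by
    rw [hsnd]
    exact (List.nodup_finRange _).map hinj
  have hcoeff : ∀ i : Fin (2 ^ n), coeff (ketN n i.val) (mkSum L) = α i := by
    intro i
    rw [coeff_mkSum]
    have hmem : ((α i, ketN n i.val) : ℂ × Term) ∈ L :=
      List.mem_map.2 ⟨i, List.mem_finRange i, rfl⟩
    simpa using listCoeff_of_nodup hnd hmem
  have hsupp : ∀ u, coeff u (mkSum L) ≠ 0 → ∃ i : Fin (2 ^ n), u = ketN n i.val := by
    intro u hu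
    rw [coeff_mkSum] at hu
    have := mem_of_listCoeff_ne_zero hu
    rw [hsnd] at this
    obtain ⟨i, _, rfl⟩ := List.mem_map.1 this
    exact ⟨i, rfl⟩
  have hbasis : ∀ p ∈ L, BasisValue p.2 := by
    intro p hp
    obtain ⟨i, _, rfl⟩ := List.mem_map.1 hp
    exact ketN_basis n i.val
  have hval : Value (mkSum L) := mkSum_value hbasis
  refine ⟨mkSum L, ⟨⟨L.map (fun p => (p.1, Sup.term p.2)), ?_, ?_⟩, hval, ?_, ?_⟩,
    hcoeff, hsupp⟩
  · intro p hp
    obtain ⟨q, hq, rfl⟩ := List.mem_map.1 hp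
    obtain ⟨i, _, rfl⟩ := List.mem_map.1 hq
    rw [sem_bits n hn]
    exact ⟨i.val, i.isLt, rfl⟩
  · exact supEq_of_coeff_eq (fun v => by rw [coeff_mkSumS_term, coeff_mkSum])
  · show fvS (mkSum L) = ∅
    refine fvS_mkSum L (fun p hp => ?_)
    obtain ⟨i, _, rfl⟩ := List.mem_map.1 hp
    exact fvT_ketN n i.val
  · have hsupp' : ∀ u, coeff u (mkSum L) ≠ 0 → ∃ i, i < 2 ^ n ∧ u = ketN n i := by
      intro u hu
      obtain ⟨i, rfl⟩ := hsupp u hu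
      exact ⟨i.val, i.isLt, rfl⟩
    rw [inn_self_eq_sum hn hsupp']
    have : ∑ i : Fin (2 ^ n), (starRingEnd ℂ) (coeff (ketN n i.val) (mkSum L))
        * coeff (ketN n i.val) (mkSum L) = 1 := by
      rw [Finset.sum_congr rfl (fun i _ => by rw [hcoeff i])]
      exact hnorm
    rw [this]
    norm_num

/-! ## Stage 11a: algebra of `cInner` -/

lemma cInner_add_left {m : ℕ} (u v w : Fin m → ℂ) :
    cInner (u + v) w = cInner u w + cInner v w := by
  simp only [cInner, Pi.add_apply, map_add, add_mul]
  rw [Finset.sum_add_distrib]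

lemma cInner_smul_left {m : ℕ} (a : ℂ) (u v : Fin m → ℂ) :
    cInner (a • u) v = (starRingEnd ℂ) a * cInner u v := by
  simp only [cInner, Pi.smul_apply, smul_eq_mul, map_mul, Finset.mul_sum]
  exact Finset.sum_congr rfl (fun i _ => by ring)

lemma cInner_smul_right {m : ℕ} (a : ℂ) (u v : Fin m → ℂ) :
    cInner u (a • v) = a * cInner u v := by
  simp only [cInner, Pi.smul_apply, smul_eq_mul, Finset.mul_sum]
  exact Finset.sum_congr rfl (fun i _ => by ring)

lemma cInner_add_right {m : ℕ} (u v w : Fin m → ℂ) :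
    cInner u (v + w) = cInner u v + cInner u w := by
  simp only [cInner, Pi.add_apply, mul_add]
  rw [Finset.sum_add_distrib]

lemma cInner_self_real {m : ℕ} (u : Fin m → ℂ) :
    cInner u u = ((∑ i, Complex.normSq (u i) : ℝ) : ℂ) := by
  rw [cInner]
  push_cast
  exact Finset.sum_congr rfl (fun i _ => Complex.normSq_eq_conj_mul_self.symm)

lemma cInner_self_eq_zero {m : ℕ} {u : Fin m → ℂ} (h : cInner u u = 0) : u = 0 := by
  rw [cInner_self_real] at h
  have hr : (∑ i, Complex.normSq (u i) : ℝ) = 0 := by exact_mod_cast h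
  have hz : ∀ i ∈ Finset.univ, Complex.normSq (u i) = 0 :=
    (Finset.sum_eq_zero_iff_of_nonneg (fun i _ => Complex.normSq_nonneg _)).1 hr
  funext i
  exact Complex.normSq_eq_zero.1 (hz i (Finset.mem_univ i))

lemma isometry_of_unit {n k : ℕ} (F : (Fin n → ℂ) →ₗ[ℂ] (Fin k → ℂ))
    (h : ∀ u : Fin n → ℂ, cInner u u = 1 → cInner (F u) (F u) = 1) :
    IsIsometricOp F := by
  have key : ∀ u, cInner (F u) (F u) = cInner u u := by
    intro u
    by_cases hu : u = 0
    · subst hu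
      rw [map_zero]
      simp [cInner]
    · set s : ℝ := ∑ i, Complex.normSq (u i) with hs
      have hspos : 0 < s := by
        have hnn : ∀ i ∈ Finset.univ, 0 ≤ Complex.normSq (u i) :=
          fun i _ => Complex.normSq_nonneg _
        rcases Function.ne_iff.1 hu with ⟨i, hi⟩
        refine Finset.sum_pos' hnn ⟨i, Finset.mem_univ i, ?_⟩
        exact Complex.normSq_pos.2 hi
      set c : ℂ := ((Real.sqrt s : ℝ) : ℂ) with hc
      have hc2 : c * c = (s : ℂ) := by
        rw [hc]
        rw [← Complex.ofReal_mul, Real.mul_self_sqrt hspos.le]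
      have hcconj : (starRingEnd ℂ) c = c := Complex.conj_ofReal _
      have hcne : c ≠ 0 := by
        rw [hc]
        simp only [ne_eq, Complex.ofReal_eq_zero]
        exact Real.sqrt_ne_zero'.2 hspos
      set u' : Fin n → ℂ := c⁻¹ • u with hu'
      have huu' : u = c • u' := by
        rw [hu', smul_smul, mul_inv_cancel₀ hcne, one_smul]
      have hunit : cInner u' u' = 1 := by
        rw [hu', cInner_smul_left, cInner_smul_right, cInner_self_real, ← hs]
        rw [map_inv₀, hcconj]
        field_simp
        rw [← hc2]; ring
      have hF := h u' hunit
      rw [huu', map_smul, cInner_smul_left, cInner_smul_right, hF,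
        cInner_smul_left, cInner_smul_right, hunit]
  intro u v
  have expand : ∀ (m : ℕ) (w z : Fin m → ℂ) (b : ℂ), cInner (w + b • z) (w + b • z)
      = cInner w w + b * cInner w z + (starRingEnd ℂ) b * cInner z w
        + (starRingEnd ℂ) b * b * cInner z z := by
    intro m w z b
    rw [cInner_add_left, cInner_add_right, cInner_add_right, cInner_smul_left,
      cInner_smul_right, cInner_smul_right, cInner_smul_left]
    ring
  have h1 := key (u + (1 : ℂ) • v)
  rw [map_add, map_smul, expand, expand, key u, key v, map_one] at h1
  have h4 := key (u + Complex.I • v)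
  rw [map_add, map_smul, expand, expand, key u, key v, Complex.conj_I] at h4
  linear_combination (1 / 2 : ℂ) * h1 + (-(Complex.I) / 2) * h4
    + ((cInner (F u) (F v) - cInner u v + cInner v u - cInner (F v) (F u)) / 2)
      * Complex.I_mul_I

/-! ## Stage 11b: the main construction -/

lemma coeff_appS_app (a b' : Term) (s u : Sup) :
    coeff (.app a b') (appS s u) = coeff a s * coeff b' u := by
  rw [coeff_appS]

lemma ket_mem_sharp {n : ℕ} (hn : 1 ≤ n) {i : ℕ} (hi : i < 2 ^ n) :
    Sup.term (ketN n i) ∈ sem (.sharp (bitsTy n)) emptyVal := by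
  refine ⟨⟨[(1, Sup.term (ketN n i))], ?_, ?_⟩, .basis (ketN_basis n i), fvT_ketN n i, ?_⟩
  · intro p hp
    simp only [List.mem_singleton] at hp
    subst hp
    rw [sem_bits n hn]
    exact ⟨i, hi, rfl⟩
  · exact .symm (.oneSmul _)
  · rw [inn_term, coeff_self]
    simp

lemma coeff_app_lam {n : ℕ} (hn : 1 ≤ n) (x : ℕ) (b : Sup) (v : Sup)
    (hsupp : ∀ u, coeff u v ≠ 0 → ∃ i, i < 2 ^ n ∧ u = ketN n i) (u : Term) :
    coeff u (appS (.term (.lam x b)) v)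
      = ∑ i : Fin (2 ^ n), coeff (ketN n i.val) v
          * coeff u (.term (.app (.lam x b) (ketN n i.val))) := by
  rw [coeff_appS]
  cases u with
  | app a b' =>
    show coeff a (.term (.lam x b)) * coeff b' v = _
    by_cases ha : a = Term.lam x b
    · subst ha
      rw [coeff_self, one_mul]
      by_cases hb' : ∃ i : Fin (2 ^ n), b' = ketN n i.val
      · obtain ⟨i, rfl⟩ := hb'
        rw [Finset.sum_eq_single i]
        · rw [coeff_term, if_pos rfl, mul_one]
        · intro j _ hji
          rw [coeff_term, if_neg, mul_zero]
          intro hc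
          rw [Term.app.injEq] at hc
          exact hji (Fin.ext (ketN_inj hn j.isLt i.isLt hc.2.symm))
        · intro habs
          exact absurd (Finset.mem_univ i) habs
      · have hz0 : coeff b' v = 0 := by
          by_contra hc
          obtain ⟨i, hi, rfl⟩ := hsupp b' hc
          exact hb' ⟨⟨i, hi⟩, rfl⟩
        rw [hz0]
        symm
        refine Finset.sum_eq_zero (fun i _ => ?_)
        rw [coeff_term, if_neg, mul_zero]
        intro hc
        rw [Term.app.injEq] at hc
        exact hb' ⟨i, hc.2⟩
    · rw [show coeff a (Sup.term (.lam x b)) = 0 from by rw [coeff_term, if_neg ha], zero_mul]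
      symm
      refine Finset.sum_eq_zero (fun i _ => ?_)
      rw [coeff_term, if_neg, mul_zero]
      intro hc
      rw [Term.app.injEq] at hc
      exact ha hc.1
  | var y =>
    refine Eq.symm (Finset.sum_eq_zero fun i _ => ?_)
    rw [coeff_term, if_neg (by simp), mul_zero]
  | ket0 =>
    refine Eq.symm (Finset.sum_eq_zero fun i _ => ?_)
    rw [coeff_term, if_neg (by simp), mul_zero]
  | ket1 =>
    refine Eq.symm (Finset.sum_eq_zero fun i _ => ?_)
    rw [coeff_term, if_neg (by simp), mul_zero]
  | cond c s₁ s₂ =>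
    refine Eq.symm (Finset.sum_eq_zero fun i _ => ?_)
    rw [coeff_term, if_neg (by simp), mul_zero]
  | lam y d =>
    refine Eq.symm (Finset.sum_eq_zero fun i _ => ?_)
    rw [coeff_term, if_neg (by simp), mul_zero]
  | pair p q =>
    refine Eq.symm (Finset.sum_eq_zero fun i _ => ?_)
    rw [coeff_term, if_neg (by simp), mul_zero]
  | lett y z p d =>
    refine Eq.symm (Finset.sum_eq_zero fun i _ => ?_)
    rw [coeff_term, if_neg (by simp), mul_zero]

lemma main_construction {n k : ℕ} (hn : 1 ≤ n) (hk : 1 ≤ k) (x : ℕ) (b : Sup)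
    (hmem : Sup.term (.lam x b)
      ∈ sem (.lolli (.sharp (bitsTy n)) (.sharp (bitsTy k))) emptyVal) :
    ∃ F : (Fin (2 ^ n) → ℂ) →ₗ[ℂ] (Fin (2 ^ k) → ℂ),
      IsIsometricOp F ∧ Represents n k (Sup.term (.lam x b)) F := by
  classical
  set t : Sup := .term (.lam x b) with ht
  have hreal : ∀ v ∈ sem (.sharp (bitsTy n)) emptyVal,
      Realizes (appS t v) (sem (.sharp (bitsTy k)) emptyVal) := hmem.2
  have hketmem : ∀ i : Fin (2 ^ n),
      (Sup.term (ketN n i.val)) ∈ sem (.sharp (bitsTy n)) emptyVal :=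
    fun i => ket_mem_sharp hn i.isLt
  choose Wit hWmem hWstep using fun i : Fin (2 ^ n) => hreal _ (hketmem i)
  have hWval : ∀ i, Value (Wit i) := fun i => (hWmem i).2.1
  have hWstep' : ∀ i : Fin (2 ^ n),
      StepStar (.term (.app (.lam x b) (ketN n i.val))) (Wit i) := fun i => hWstep i
  set F : (Fin (2 ^ n) → ℂ) →ₗ[ℂ] (Fin (2 ^ k) → ℂ) :=
    (Pi.basisFun ℂ (Fin (2 ^ n))).constr ℂ (fun i => lmap k (Wit i)) with hFdef
  have hFapp : ∀ (u : Fin (2 ^ n) → ℂ) (j : Fin (2 ^ k)),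
      F u j = ∑ i, u i * coeff (ketN k j.val) (Wit i) := by
    intro u j
    rw [hFdef, Module.Basis.constr_apply_fintype]
    simp only [Pi.basisFun_equivFun, LinearEquiv.refl_apply, Finset.sum_apply,
      Pi.smul_apply, smul_eq_mul]
    rfl
  have hlmap : ∀ (m : ℕ) (w : Sup) (j : Fin (2 ^ m)), lmap m w j = coeff (ketN m j.val) w :=
    fun m w j => rfl
  -- coefficient description of applications
  have hkey : ∀ v, (∀ u, coeff u v ≠ 0 → ∃ i, i < 2 ^ n ∧ u = ketN n i) →
      ∀ u, coeff u (appS t v)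
        = ∑ i : Fin (2 ^ n), coeff (ketN n i.val) v
            * coeff u (.term (.app (.lam x b) (ketN n i.val))) :=
    fun v hs u => coeff_app_lam hn x b v hs u
  have hne : ∀ v ∈ sem (.sharp (bitsTy n)) emptyVal,
      ∃ u, ¬ BasisValue u ∧ coeff u (appS t v) ≠ 0 := by
    intro v hv
    have hone := sharp_norm_one hn hv
    have : ∃ i : Fin (2 ^ n), coeff (ketN n i.val) v ≠ 0 := by
      by_contra hc
      push_neg at hc
      rw [Finset.sum_congr rfl (fun i _ => by rw [hc i, map_zero, zero_mul])] at hone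
      simp at hone
    obtain ⟨i, hi⟩ := this
    refine ⟨.app (.lam x b) (ketN n i.val), not_basis_app, ?_⟩
    rw [coeff_appS_app, coeff_self, one_mul]
    exact hi
  have hlinset : ∀ v ∈ sem (.sharp (bitsTy n)) emptyVal, ∀ W : Sup,
      (∀ u, coeff u W = ∑ i : Fin (2 ^ n), coeff (ketN n i.val) v * coeff u (Wit i)) →
      StepStar (appS t v) W := by
    intro v hv W hW
    exact linear_normalize (fun i => coeff (ketN n i.val) v)
      (fun i => .app (.lam x b) (ketN n i.val)) Wit hWstep' hWval
      (appS t v) (hkey v (sharp_supp hn hv)) (hne v hv) W hW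
  have himg : ∀ v ∈ sem (.sharp (bitsTy n)) emptyVal, ∃ W : Sup, Value W ∧
      (∀ u, coeff u W = ∑ i : Fin (2 ^ n), coeff (ketN n i.val) v * coeff u (Wit i)) ∧
      StepStar (appS t v) W := by
    intro v hv
    obtain ⟨W, hWv, hWc⟩ := value_of_basis_fn
      (fun u => ∑ i : Fin (2 ^ n), coeff (ketN n i.val) v * coeff u (Wit i))
      (support_sum_coeff_finite _ _)
      (fun u hnb => Finset.sum_eq_zero (fun i _ => by
        have : coeff u (Wit i) = 0 := by
          by_contra hc
          exact hnb (value_support (hWval i) u hc)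
        rw [this, mul_zero]))
    exact ⟨W, hWv, hWc, hlinset v hv W hWc⟩
  have hforward : ∀ v ∈ sem (.sharp (bitsTy n)) emptyVal, ∀ w : Sup, Value w →
      StepStar (appS t v) w →
      ∀ u, coeff u w = ∑ i : Fin (2 ^ n), coeff (ketN n i.val) v * coeff u (Wit i) := by
    intro v hv w hwv hws u
    obtain ⟨W, hWv, hWc, hWs⟩ := himg v hv
    rw [stepStar_det hws hwv hWs hWv u, hWc u]
  refine ⟨F, ?_, ?_⟩
  · refine isometry_of_unit F (fun α hα => ?_)
    obtain ⟨V, hVmem, hVcoeff, hVsupp⟩ := mk_vec hn α hα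
    obtain ⟨w, hwmem, hwstep⟩ := hreal V hVmem
    have hwval : Value w := hwmem.2.1
    have hfw := hforward V hVmem w hwval hwstep
    have hFα : ∀ j : Fin (2 ^ k), F α j = coeff (ketN k j.val) w := by
      intro j
      rw [hFapp α j, hfw (ketN k j.val)]
      exact Finset.sum_congr rfl (fun i _ => by rw [hVcoeff i])
    have := sharp_norm_one hk hwmem
    show (∑ j : Fin (2 ^ k), (starRingEnd ℂ) (F α j) * F α j) = 1
    rw [Finset.sum_congr rfl (fun j _ => by rw [hFα j])]
    exact this
  · intro v w hv hw
    have hwval : Value w := hw.2.1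
    constructor
    · intro hstep
      have hfw := hforward v hv w hwval hstep
      funext j
      rw [hFapp (lmap n v) j, hlmap k w j, hfw (ketN k j.val)]
      exact Finset.sum_congr rfl (fun i _ => by rw [hlmap n v i])
    · intro hFeq
      refine hlinset v hv w (fun u => ?_)
      by_cases hu : ∃ j : Fin (2 ^ k), u = ketN k j.val
      · obtain ⟨j, rfl⟩ := hu
        have h1 := congrFun hFeq j
        rw [hFapp (lmap n v) j, hlmap k w j] at h1
        rw [← h1]
        exact Finset.sum_congr rfl (fun i _ => by rw [hlmap n v i])
      · have h1 : coeff u w = 0 := by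
          by_contra hc
          obtain ⟨j, hj, rfl⟩ := sharp_supp hk hw u hc
          exact hu ⟨⟨j, hj⟩, rfl⟩
        rw [h1]
        symm
        refine Finset.sum_eq_zero (fun i _ => ?_)
        have h2 : coeff u (Wit i) = 0 := by
          by_contra hc
          obtain ⟨j, hj, rfl⟩ := sharp_supp hk (hWmem i) u hc
          exact hu ⟨⟨j, hj⟩, rfl⟩
        rw [h2, mul_zero]

/-! ## Final assembly -/

lemma injective_of_isometric {n k : ℕ} (F : (Fin n → ℂ) →ₗ[ℂ] (Fin k → ℂ))
    (hiso : IsIsometricOp F) : Function.Injective F := by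
  intro u v huv
  have h0 : F (u - v) = 0 := by rw [map_sub, huv, sub_self]
  have h1 := hiso (u - v) (u - v)
  rw [h0] at h1
  have hz : cInner (u - v) (u - v) = 0 := by
    rw [← h1]
    simp [cInner]
  exact sub_eq_zero.1 (cInner_self_eq_zero hz)


end

end AuxUnitarity

/-- **Soundness / unitarity** (Theorem 5.7): any closed superposition
`λx.t⃗ ∈ ⟦♯(𝔹ⁿ) ⊸ ♯(𝔹ᵏ)⟧_∅` with `k ≥ n` represents an isometry
`ℂ^{2ⁿ} → ℂ^{2ᵏ}`; with `k = n` it represents a unitary operator; and for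
`k < n` the type is uninhabited. -/
theorem unitarity_soundness (n k : ℕ) (hn : 1 ≤ n) (hk : 1 ≤ k) :
    (∀ (x : ℕ) (b : Sup),
      Sup.term (.lam x b) ∈ sem (.lolli (.sharp (bitsTy n)) (.sharp (bitsTy k))) emptyVal →
      (n ≤ k → ∃ F : (Fin (2 ^ n) → ℂ) →ₗ[ℂ] (Fin (2 ^ k) → ℂ),
        IsIsometricOp F ∧ Represents n k (Sup.term (.lam x b)) F) ∧
      (k = n → ∃ F : (Fin (2 ^ n) → ℂ) →ₗ[ℂ] (Fin (2 ^ k) → ℂ),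
        IsIsometricOp F ∧ Function.Bijective F ∧
        Represents n k (Sup.term (.lam x b)) F)) ∧
    (k < n → sem (.lolli (.sharp (bitsTy n)) (.sharp (bitsTy k))) emptyVal = ∅) := by
  constructor
  · intro x b hmem
    obtain ⟨F, hiso, hrep⟩ := main_construction hn hk x b hmem
    constructor
    · intro _
      exact ⟨F, hiso, hrep⟩
    · intro hkn
      subst hkn
      have hinj : Function.Injective F := injective_of_isometric F hiso
      exact ⟨F, hiso, ⟨hinj, LinearMap.surjective_of_injective hinj⟩, hrep⟩
  · intro hkn
    rw [Set.eq_empty_iff_forall_notMem]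
    intro s hs
    have hs' := hs
    obtain ⟨⟨x, b, rfl⟩, -⟩ := hs'
    obtain ⟨F, hiso, -⟩ := main_construction hn hk x b hs
    have hinj : Function.Injective F := injective_of_isometric F hiso
    have hle := LinearMap.finrank_le_finrank_of_injective hinj
    rw [Module.finrank_pi ℂ, Module.finrank_pi ℂ, Fintype.card_fin, Fintype.card_fin] at hle
    have : n ≤ k := (Nat.pow_le_pow_iff_right (by omega)).1 hle
    omega

end PUNQFormal
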